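/- arXiv:1712.05662 — 5 statements merged into one kernel-verified Lean document; each statement's English description precedes it below -/
import Mathlib

section
/- Under the standing assumptions, for each t = 1,…,n−1 and each i = 1,…,n, the diagonal blocks Z_{ii} of the inverse A⁻¹ satisfy ‖I‖/(‖A_i‖ + τ_{i−1,t}‖C_{i−1}‖ + ω_{i+1,t}‖B_i‖) ≤ ‖Z_{ii}‖, and moreover, if ‖A_i⁻¹‖⁻¹ − τ_{i−1,t}‖C_{i−1}‖ − ω_{i+1,t}‖B_i‖ > 0, then ‖Z_{ii}‖ ≤ ‖I‖/(‖A_i⁻¹‖⁻¹ − τ_{i−1,t}‖C_{i−1}‖ − ω_{i+1,t}‖B_i‖), where C_0 = B_n = 0 and τ_{0,t} = ω_{n+1,t} = 0. -/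
open scoped Matrix
attribute [local instance] Matrix.linftyOpNormedRing

/-- The block tridiagonal matrix with diagonal blocks `A 1, …, A n`, superdiagonal blocks
`B 1, …, B (n-1)` and subdiagonal blocks `C 1, …, C (n-1)`. -/
noncomputable def blockTridiag (n m : ℕ) (A B C : ℕ → Matrix (Fin m) (Fin m) ℂ) :
    Matrix (Fin n × Fin m) (Fin n × Fin m) ℂ :=
  Matrix.of fun p q =>
    if p.1 = q.1 then A ((p.1 : ℕ) + 1) p.2 q.2
    else if (p.1 : ℕ) + 1 = (q.1 : ℕ) then B ((p.1 : ℕ) + 1) p.2 q.2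
    else if (q.1 : ℕ) + 1 = (p.1 : ℕ) then C ((q.1 : ℕ) + 1) p.2 q.2
    else 0

section helpers
variable {n m : ℕ}

lemma sum_ite_nat_eq (v : ℕ) (g : Fin n → ℂ) :
    (∑ p : Fin n, if v = (p : ℕ) then g p else 0) =
      if h : v < n then g ⟨v, h⟩ else 0 := by
  by_cases h : v < n
  · rw [dif_pos h, Finset.sum_eq_single (⟨v, h⟩ : Fin n)]
    · simp
    · intro b _ hb
      rw [if_neg]
      intro hv
      exact hb (by ext; simp [hv.symm])
    · simp
  · rw [dif_neg h]
    apply Finset.sum_eq_zero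
    intro p _
    rw [if_neg]
    intro hv
    exact h (hv ▸ p.2)

lemma sum_ite_nat_eq' (v : ℕ) (g : Fin n → ℂ) :
    (∑ p : Fin n, if (p : ℕ) + 1 = v then g p else 0) =
      if h : v - 1 < n ∧ 1 ≤ v then g ⟨v - 1, h.1⟩ else 0 := by
  by_cases h : v - 1 < n ∧ 1 ≤ v
  · rw [dif_pos h, Finset.sum_eq_single (⟨v - 1, h.1⟩ : Fin n)]
    · rw [if_pos (show ((⟨v - 1, h.1⟩ : Fin n) : ℕ) + 1 = v by simp; omega)]
    · intro b _ hb
      rw [if_neg]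
      intro hv
      exact hb (by ext; simp; omega)
    · simp
  · rw [dif_neg h]
    apply Finset.sum_eq_zero
    intro p _
    rw [if_neg]
    intro hv
    have := p.2
    omega

lemma block_row_eq (A B C : ℕ → Matrix (Fin m) (Fin m) ℂ)
    (hAinv : IsUnit (blockTridiag n m A B C)) (i j : Fin n) :
    A ((i : ℕ) + 1) *
        (Matrix.of fun k l => (blockTridiag n m A B C)⁻¹ (i, k) (j, l)) +
      (if h : (i : ℕ) + 1 < n then
        B ((i : ℕ) + 1) *
          (Matrix.of fun k l => (blockTridiag n m A B C)⁻¹ (⟨(i : ℕ) + 1, h⟩, k) (j, l))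
       else 0) +
      (if h : 0 < (i : ℕ) then
        C (i : ℕ) *
          (Matrix.of fun k l => (blockTridiag n m A B C)⁻¹
            (⟨(i : ℕ) - 1, lt_of_le_of_lt (Nat.sub_le _ _) i.2⟩, k) (j, l))
       else 0) =
      if i = j then (1 : Matrix (Fin m) (Fin m) ℂ) else 0 := by
  set T := blockTridiag n m A B C with hTdef
  have hdet : IsUnit T.det := (Matrix.isUnit_iff_isUnit_det _).mp hAinv
  have hT : T * T⁻¹ = 1 := Matrix.mul_nonsing_inv _ hdet
  ext k l
  have h1 : (T * T⁻¹) (i, k) (j, l) = (1 : Matrix (Fin n × Fin m) (Fin n × Fin m) ℂ) (i, k) (j, l) := by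
    rw [hT]
  rw [Matrix.mul_apply, Fintype.sum_prod_type] at h1
  have key : ∀ p : Fin n,
      (∑ q : Fin m, T (i, k) (p, q) * T⁻¹ (p, q) (j, l)) =
        (if i = p then ∑ q : Fin m, A ((i : ℕ) + 1) k q * T⁻¹ (p, q) (j, l) else 0) +
        (if (i : ℕ) + 1 = (p : ℕ) then ∑ q : Fin m, B ((i : ℕ) + 1) k q * T⁻¹ (p, q) (j, l) else 0) +
        (if (p : ℕ) + 1 = (i : ℕ) then ∑ q : Fin m, C ((p : ℕ) + 1) k q * T⁻¹ (p, q) (j, l) else 0) := by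
    intro p
    by_cases hc : i = p
    · subst hc
      have h2 : ¬((i : ℕ) + 1 = (i : ℕ)) := by omega
      simp only [hTdef, blockTridiag, Matrix.of_apply, if_pos rfl, if_neg h2,
        if_true, add_zero]
    · rw [if_neg hc, zero_add]
      by_cases h2 : (i : ℕ) + 1 = (p : ℕ)
      · have h3 : ¬((p : ℕ) + 1 = (i : ℕ)) := by omega
        simp only [hTdef, blockTridiag, Matrix.of_apply, if_neg hc, if_pos h2, if_neg h3, add_zero]
      · rw [if_neg h2, zero_add]
        by_cases h3 : (p : ℕ) + 1 = (i : ℕ)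
        · simp only [hTdef, blockTridiag, Matrix.of_apply, if_neg hc, if_neg h2, if_pos h3]
        · simp only [hTdef, blockTridiag, Matrix.of_apply, if_neg hc, if_neg h2, if_neg h3,
            zero_mul, Finset.sum_const_zero, if_neg]
  rw [Finset.sum_congr rfl (fun p _ => key p)] at h1
  rw [Finset.sum_add_distrib, Finset.sum_add_distrib] at h1
  rw [Finset.sum_ite_eq Finset.univ i
      (fun p => ∑ q : Fin m, A ((i : ℕ) + 1) k q * T⁻¹ (p, q) (j, l))] at h1
  rw [sum_ite_nat_eq ((i : ℕ) + 1)
      (fun p => ∑ q : Fin m, B ((i : ℕ) + 1) k q * T⁻¹ (p, q) (j, l))] at h1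
  rw [sum_ite_nat_eq' ((i : ℕ))
      (fun p => ∑ q : Fin m, C ((p : ℕ) + 1) k q * T⁻¹ (p, q) (j, l))] at h1
  simp only [Finset.mem_univ, if_true] at h1
  simp only [Matrix.add_apply]
  rw [Matrix.mul_apply]
  have e2 : ((if h : (i : ℕ) + 1 < n then
        B ((i : ℕ) + 1) *
          (Matrix.of fun k l => T⁻¹ (⟨(i : ℕ) + 1, h⟩, k) (j, l))
       else 0) : Matrix (Fin m) (Fin m) ℂ) k l =
      (if h : (i : ℕ) + 1 < n then
        ∑ q : Fin m, B ((i : ℕ) + 1) k q * T⁻¹ ((⟨(i : ℕ) + 1, h⟩ : Fin n), q) (j, l) else 0) := by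
    by_cases h : (i : ℕ) + 1 < n
    · rw [dif_pos h, dif_pos h, Matrix.mul_apply]
      simp
    · rw [dif_neg h, dif_neg h, Matrix.zero_apply]
  have e3 : ((if h : 0 < (i : ℕ) then
        C (i : ℕ) *
          (Matrix.of fun k l => T⁻¹
            ((⟨(i : ℕ) - 1, lt_of_le_of_lt (Nat.sub_le _ _) i.2⟩ : Fin n), k) (j, l))
       else 0) : Matrix (Fin m) (Fin m) ℂ) k l =
      (if h : (i : ℕ) - 1 < n ∧ 1 ≤ (i : ℕ) then
        ∑ q : Fin m, C ((i : ℕ) - 1 + 1) k q *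
          T⁻¹ ((⟨(i : ℕ) - 1, h.1⟩ : Fin n), q) (j, l) else 0) := by
    by_cases h : 0 < (i : ℕ)
    · have h' : (i : ℕ) - 1 < n ∧ 1 ≤ (i : ℕ) := ⟨lt_of_le_of_lt (Nat.sub_le _ _) i.2, h⟩
      rw [dif_pos h, dif_pos h', Matrix.mul_apply]
      have : (i : ℕ) - 1 + 1 = (i : ℕ) := by omega
      simp [this]
    · rw [dif_neg h, dif_neg (by omega : ¬((i : ℕ) - 1 < n ∧ 1 ≤ (i : ℕ))), Matrix.zero_apply]
  simp only [Matrix.of_apply]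
  rw [e2, e3, h1]
  rw [Matrix.one_apply]
  by_cases hij : i = j
  · subst hij
    rw [if_pos rfl, Matrix.one_apply]
    by_cases hkl : k = l
    · rw [if_pos hkl, if_pos (by rw [hkl])]
    · rw [if_neg hkl, if_neg (by simp [Prod.ext_iff, hkl])]
  · rw [if_neg hij, if_neg (by simp [Prod.ext_iff, hij]), Matrix.zero_apply]

lemma div_bound_aux (x y z cc bb s : ℝ) (hc : 0 ≤ cc) (hcs : cc * s < 1)
    (hx : x ≤ bb * y + cc * z) (hz : z ≤ s * x) :
    x ≤ (bb / (1 - cc * s)) * y := by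
  have h1 : cc * z ≤ cc * (s * x) := mul_le_mul_of_nonneg_left hz hc
  have h2 : x * (1 - cc * s) ≤ bb * y := by nlinarith
  rw [div_mul_eq_mul_div, le_div_iff₀ (by linarith)]
  exact h2

end helpers

set_option maxHeartbeats 2000000 in
theorem diag_block_bounds_iter
    (n m : ℕ) (hn : 2 ≤ n) (hm : 1 ≤ m)
    (A B C : ℕ → Matrix (Fin m) (Fin m) ℂ)
    (hC0 : C 0 = 0) (hBn : B n = 0)
    (hAinv : IsUnit (blockTridiag n m A B C))
    (hB : ∀ i, 1 ≤ i → i ≤ n - 1 → IsUnit (B i))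
    (hC : ∀ i, 1 ≤ i → i ≤ n - 1 → IsUnit (C i))
    (hAi : ∀ i, 1 ≤ i → i ≤ n → IsUnit (A i))
    (hdom : ∀ i, 1 ≤ i → i ≤ n → ‖(A i)⁻¹ * C (i - 1)‖ + ‖(A i)⁻¹ * B i‖ ≤ 1)
    (hB1 : ‖(A 1)⁻¹ * B 1‖ < 1)
    (hCn : ‖(A n)⁻¹ * C (n - 1)‖ < 1)
    (τ : ℕ → ℝ)
    (hτ : ∀ i, 1 ≤ i → i ≤ n → τ i = ‖(A i)⁻¹ * B i‖ / (1 - ‖(A i)⁻¹ * C (i - 1)‖))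
    (ω : ℕ → ℝ)
    (hω : ∀ i, 1 ≤ i → i ≤ n → ω i = ‖(A i)⁻¹ * C (i - 1)‖ / (1 - ‖(A i)⁻¹ * B i‖))
    (τ' : ℕ → ℕ → ℝ)
    (hτ'1 : ∀ i, τ' i 1 = τ i)
    (hτ'0 : ∀ t, τ' 0 t = 0)
    (hτ'a : ∀ i t, 1 ≤ i → i ≤ n → 2 ≤ t → t ≤ n - 1 → i < t → τ' i t = τ' i (t - 1))
    (hτ'b : ∀ i t, 1 ≤ i → i ≤ n → 2 ≤ t → t ≤ n - 1 → t ≤ i →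
      τ' i t = ‖(A i)⁻¹ * B i‖ / (1 - ‖(A i)⁻¹ * C (i - 1)‖ * τ' (i - 1) (t - 1)))
    (ω' : ℕ → ℕ → ℝ)
    (hω'1 : ∀ i, ω' i 1 = ω i)
    (hω'n : ∀ t, ω' (n + 1) t = 0)
    (hω'a : ∀ i t, 1 ≤ i → i ≤ n → 2 ≤ t → t ≤ n - 1 → n - t + 1 < i → ω' i t = ω' i (t - 1))
    (hω'b : ∀ i t, 1 ≤ i → i ≤ n → 2 ≤ t → t ≤ n - 1 → i ≤ n - t + 1 →
      ω' i t = ‖(A i)⁻¹ * C (i - 1)‖ / (1 - ‖(A i)⁻¹ * B i‖ * ω' (i + 1) (t - 1)))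
    (Z : ℕ → ℕ → Matrix (Fin m) (Fin m) ℂ)
    (hZ : ∀ i j : Fin n, Z ((i : ℕ) + 1) ((j : ℕ) + 1) =
      Matrix.of fun k l => (blockTridiag n m A B C)⁻¹ (i, k) (j, l)) :
    ∀ t, 1 ≤ t → t ≤ n - 1 → ∀ i, 1 ≤ i → i ≤ n →
      (‖(1 : Matrix (Fin m) (Fin m) ℂ)‖ /
          (‖A i‖ + τ' (i - 1) t * ‖C (i - 1)‖ + ω' (i + 1) t * ‖B i‖) ≤ ‖Z i i‖) ∧
      (0 < ‖(A i)⁻¹‖⁻¹ - τ' (i - 1) t * ‖C (i - 1)‖ - ω' (i + 1) t * ‖B i‖ →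
        ‖Z i i‖ ≤ ‖(1 : Matrix (Fin m) (Fin m) ℂ)‖ /
          (‖(A i)⁻¹‖⁻¹ - τ' (i - 1) t * ‖C (i - 1)‖ - ω' (i + 1) t * ‖B i‖)) := by
  -- basic norm facts
  have hone0 : (1 : Matrix (Fin m) (Fin m) ℂ) ≠ 0 := by
    intro h
    have h2 := congrFun (congrFun h ⟨0, hm⟩) ⟨0, hm⟩
    simp [Matrix.one_apply] at h2
  haveI : Nontrivial (Matrix (Fin m) (Fin m) ℂ) := ⟨1, 0, hone0⟩
  have hIpos : 0 < ‖(1 : Matrix (Fin m) (Fin m) ℂ)‖ := norm_pos_iff.mpr hone0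
  have hAinvmul : ∀ i, 1 ≤ i → i ≤ n → (A i)⁻¹ * A i = 1 := fun i h1 h2 =>
    Matrix.nonsing_inv_mul _ ((Matrix.isUnit_iff_isUnit_det _).mp (hAi i h1 h2))
  have hAmulinv : ∀ i, 1 ≤ i → i ≤ n → A i * (A i)⁻¹ = 1 := fun i h1 h2 =>
    Matrix.mul_nonsing_inv _ ((Matrix.isUnit_iff_isUnit_det _).mp (hAi i h1 h2))
  have hAiinvU : ∀ i, 1 ≤ i → i ≤ n → IsUnit ((A i)⁻¹) := fun i h1 h2 =>
    ⟨⟨(A i)⁻¹, A i, hAinvmul i h1 h2, hAmulinv i h1 h2⟩, rfl⟩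
  have hbpos : ∀ i, 1 ≤ i → i ≤ n - 1 → 0 < ‖(A i)⁻¹ * B i‖ := by
    intro i h1 h2
    exact norm_pos_iff.mpr (IsUnit.ne_zero ((hAiinvU i h1 (by omega)).mul (hB i h1 h2)))
  have hcpos : ∀ i, 2 ≤ i → i ≤ n → 0 < ‖(A i)⁻¹ * C (i - 1)‖ := by
    intro i h1 h2
    exact norm_pos_iff.mpr (IsUnit.ne_zero ((hAiinvU i (by omega) h2).mul
      (hC (i - 1) (by omega) (by omega))))
  have hc1 : ‖(A 1)⁻¹ * C 0‖ = 0 := by rw [hC0, mul_zero, norm_zero]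
  have hbn0 : ‖(A n)⁻¹ * B n‖ = 0 := by rw [hBn, mul_zero, norm_zero]
  have hclt : ∀ i, 1 ≤ i → i ≤ n → ‖(A i)⁻¹ * C (i - 1)‖ < 1 := by
    intro i h1 h2
    by_cases hi1 : i = 1
    · subst hi1; simpa [hc1] using one_pos
    by_cases hin : i = n
    · subst hin; exact hCn
    · have hp := hbpos i h1 (by omega)
      have hd := hdom i h1 h2
      linarith
  have hblt : ∀ i, 1 ≤ i → i ≤ n → ‖(A i)⁻¹ * B i‖ < 1 := by
    intro i h1 h2
    by_cases hin : i = n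
    · subst hin; simpa [hbn0] using one_pos
    by_cases hi1 : i = 1
    · subst hi1; exact hB1
    · have hp := hcpos i (by omega) h2
      have hd := hdom i h1 h2
      linarith
  -- bounds 0 ≤ τ' ≤ 1 and 0 ≤ ω' ≤ 1
  have htau : ∀ t, 1 ≤ t → t ≤ n - 1 → ∀ i, i ≤ n → 0 ≤ τ' i t ∧ τ' i t ≤ 1 := by
    intro t
    induction t with
    | zero => omega
    | succ t iht =>
      intro _ hle i hin
      rcases Nat.eq_zero_or_pos i with hi0 | hi1
      · subst hi0; rw [hτ'0]; norm_num
      by_cases ht0 : t = 0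
      · subst ht0
        rw [hτ'1, hτ i hi1 hin]
        have h1 := hclt i hi1 hin
        have h2 := hdom i hi1 hin
        constructor
        · exact div_nonneg (norm_nonneg _) (by linarith)
        · rw [div_le_one (by linarith)]; linarith
      · have ht1 : 1 ≤ t := by omega
        by_cases hcase : i < t + 1
        · rw [hτ'a i (t + 1) hi1 hin (by omega) hle hcase, Nat.add_sub_cancel]
          exact iht ht1 (by omega) i hin
        · rw [hτ'b i (t + 1) hi1 hin (by omega) hle (by omega), Nat.add_sub_cancel]
          obtain ⟨hs0, hs1⟩ := iht ht1 (by omega) (i - 1) (by omega)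
          have hcl := hclt i hi1 hin
          have hcn := norm_nonneg ((A i)⁻¹ * C (i - 1))
          have hbnn := norm_nonneg ((A i)⁻¹ * B i)
          have hd := hdom i hi1 hin
          have hden : ‖(A i)⁻¹ * C (i - 1)‖ * τ' (i - 1) t ≤ ‖(A i)⁻¹ * C (i - 1)‖ := by
            nlinarith
          constructor
          · exact div_nonneg hbnn (by nlinarith)
          · rw [div_le_one (by nlinarith)]; linarith
  have homega : ∀ t, 1 ≤ t → t ≤ n - 1 → ∀ i, 1 ≤ i → i ≤ n + 1 → 0 ≤ ω' i t ∧ ω' i t ≤ 1 := by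
    intro t
    induction t with
    | zero => omega
    | succ t iht =>
      intro _ hle i hi1 hin
      by_cases hin1 : i = n + 1
      · subst hin1; rw [hω'n]; norm_num
      have hin' : i ≤ n := by omega
      by_cases ht0 : t = 0
      · subst ht0
        rw [hω'1, hω i hi1 hin']
        have h1 := hblt i hi1 hin'
        have h2 := hdom i hi1 hin'
        constructor
        · exact div_nonneg (norm_nonneg _) (by linarith)
        · rw [div_le_one (by linarith)]; linarith
      · have ht1 : 1 ≤ t := by omega
        by_cases hcase : n - (t + 1) + 1 < i
        · rw [hω'a i (t + 1) hi1 hin' (by omega) hle hcase, Nat.add_sub_cancel]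
          exact iht ht1 (by omega) i hi1 hin
        · rw [hω'b i (t + 1) hi1 hin' (by omega) hle (by omega), Nat.add_sub_cancel]
          obtain ⟨hs0, hs1⟩ := iht ht1 (by omega) (i + 1) (by omega) (by omega)
          have hbl := hblt i hi1 hin'
          have hcn := norm_nonneg ((A i)⁻¹ * C (i - 1))
          have hbnn := norm_nonneg ((A i)⁻¹ * B i)
          have hd := hdom i hi1 hin'
          have hden : ‖(A i)⁻¹ * B i‖ * ω' (i + 1) t ≤ ‖(A i)⁻¹ * B i‖ := by
            nlinarith
          constructor
          · exact div_nonneg hcn (by nlinarith)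
          · rw [div_le_one (by nlinarith)]; linarith
  -- ℕ-indexed blocks of the inverse
  set T := blockTridiag n m A B C with hTdef
  set Zb : ℕ → ℕ → Matrix (Fin m) (Fin m) ℂ :=
    fun i j => if h : i < n ∧ j < n then
      Matrix.of (fun k l => T⁻¹ (⟨i, h.1⟩, k) (⟨j, h.2⟩, l)) else 0 with hZbdef
  have hZin : ∀ i j (hi : i < n) (hj : j < n),
      Zb i j = Matrix.of (fun k l => T⁻¹ (⟨i, hi⟩, k) (⟨j, hj⟩, l)) := by
    intro i j hi hj
    rw [hZbdef]
    exact dif_pos ⟨hi, hj⟩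
  have hZout : ∀ i j, n ≤ i ∨ n ≤ j → Zb i j = 0 := by
    intro i j hij
    rw [hZbdef]
    exact dif_neg (by omega)
  -- the row equation in ℕ indices
  have hrow : ∀ i j : ℕ, i < n → j < n →
      A (i + 1) * Zb i j + B (i + 1) * Zb (i + 1) j + C i * Zb (i - 1) j =
        if i = j then 1 else 0 := by
    intro i j hi hj
    have h := block_row_eq A B C hAinv ⟨i, hi⟩ ⟨j, hj⟩
    rw [← hTdef] at h
    rw [hZin i j hi hj]
    have e2 : B (i + 1) * Zb (i + 1) j =
        (if h2 : i + 1 < n then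
          B (i + 1) * Matrix.of (fun k l => T⁻¹ (⟨i + 1, h2⟩, k) (⟨j, hj⟩, l)) else 0) := by
      by_cases hb2 : i + 1 < n
      · rw [dif_pos hb2, hZin (i + 1) j hb2 hj]
      · rw [dif_neg hb2, hZout (i + 1) j (by omega), mul_zero]
    have e3 : C i * Zb (i - 1) j =
        (if _ : 0 < i then
          C i * Matrix.of (fun k l => T⁻¹ (⟨i - 1, by omega⟩, k) (⟨j, hj⟩, l)) else 0) := by
      by_cases hb3 : 0 < i
      · rw [dif_pos hb3, hZin (i - 1) j (by omega) hj]
      · rw [dif_neg hb3]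
        have hi0 : i = 0 := by omega
        subst hi0
        rw [hC0, zero_mul]
    have e4 : (if (⟨i, hi⟩ : Fin n) = ⟨j, hj⟩ then (1 : Matrix (Fin m) (Fin m) ℂ) else 0) =
        if i = j then 1 else 0 := by
      simp [Fin.mk.injEq]
    rw [e2, e3, ← e4]
    exact h
  -- one-step inequality
  have hstep : ∀ i j : ℕ, j ≠ i → j < n → i < n →
      ‖Zb j i‖ ≤ ‖(A (j + 1))⁻¹ * B (j + 1)‖ * ‖Zb (j + 1) i‖ +
        ‖(A (j + 1))⁻¹ * C j‖ * ‖Zb (j - 1) i‖ := by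
    intro i j hji hjn hin
    have h := hrow j i hjn hin
    rw [if_neg hji] at h
    have hAu := hAinvmul (j + 1) (by omega) (by omega)
    have hsolve : Zb j i =
        -((A (j + 1))⁻¹ * (B (j + 1) * Zb (j + 1) i) + (A (j + 1))⁻¹ * (C j * Zb (j - 1) i)) := by
      have h0 : A (j + 1) * Zb j i = -(B (j + 1) * Zb (j + 1) i + C j * Zb (j - 1) i) := by
        rw [add_assoc] at h
        exact eq_neg_of_add_eq_zero_left h
      calc Zb j i = ((A (j + 1))⁻¹ * A (j + 1)) * Zb j i := by rw [hAu, one_mul]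
        _ = (A (j + 1))⁻¹ * (A (j + 1) * Zb j i) := by rw [mul_assoc]
        _ = (A (j + 1))⁻¹ * -(B (j + 1) * Zb (j + 1) i + C j * Zb (j - 1) i) := by rw [h0]
        _ = -((A (j + 1))⁻¹ * (B (j + 1) * Zb (j + 1) i) +
              (A (j + 1))⁻¹ * (C j * Zb (j - 1) i)) := by rw [mul_neg, mul_add]
    rw [hsolve, norm_neg]
    refine le_trans (norm_add_le _ _) (add_le_add ?_ ?_)
    · rw [← mul_assoc]
      exact norm_mul_le _ _
    · rw [← mul_assoc]
      exact norm_mul_le _ _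
  -- decay for lower triangle, base case t = 1
  have hdec1 : ∀ j i : ℕ, j < i → i < n →
      ‖Zb j i‖ ≤ τ' (j + 1) 1 * ‖Zb (j + 1) i‖ := by
    intro j
    induction j using Nat.strong_induction_on with
    | _ j ihj =>
      intro i hji hin
      have hjn : j < n := by omega
      have hs := hstep i j (by omega) hjn hin
      have hcl : ‖(A (j + 1))⁻¹ * C j‖ < 1 := by
        have h := hclt (j + 1) (by omega) (by omega)
        rwa [Nat.add_sub_cancel] at h
      have hτv : τ' (j + 1) 1 = ‖(A (j + 1))⁻¹ * B (j + 1)‖ / (1 - ‖(A (j + 1))⁻¹ * C j‖) := by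
        rw [hτ'1, hτ (j + 1) (by omega) (by omega), Nat.add_sub_cancel]
      rcases Nat.eq_zero_or_pos j with hj0 | hj1
      · subst hj0
        simp only [Nat.zero_add] at hs hτv ⊢
        rw [hc1, zero_mul, add_zero] at hs
        rw [hτv, hc1, sub_zero, div_one]
        exact hs
      · have hih := ihj (j - 1) (by omega) i (by omega) hin
        rw [show j - 1 + 1 = j by omega] at hih
        have hτb := htau 1 le_rfl (by omega) j (by omega)
        have hz1 : ‖Zb (j - 1) i‖ ≤ 1 * ‖Zb j i‖ := by
          nlinarith [norm_nonneg (Zb j i), hτb.1, hτb.2]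
        have hres := div_bound_aux ‖Zb j i‖ ‖Zb (j + 1) i‖ ‖Zb (j - 1) i‖
          ‖(A (j + 1))⁻¹ * C j‖ ‖(A (j + 1))⁻¹ * B (j + 1)‖ 1
          (norm_nonneg _) (by rw [mul_one]; exact hcl) hs hz1
        rw [mul_one] at hres
        rw [hτv]
        exact hres
  -- decay for lower triangle
  have hdecτ : ∀ t, 1 ≤ t → t ≤ n - 1 → ∀ i j : ℕ, j < i → i < n →
      ‖Zb j i‖ ≤ τ' (j + 1) t * ‖Zb (j + 1) i‖ := by
    intro t
    induction t with
    | zero => omega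
    | succ t iht =>
      intro _ hle i j hji hin
      by_cases ht0 : t = 0
      · subst ht0
        exact hdec1 j i hji hin
      · have ht1 : 1 ≤ t := by omega
        by_cases hcase : j + 1 < t + 1
        · rw [hτ'a (j + 1) (t + 1) (by omega) (by omega) (by omega) hle hcase,
            Nat.add_sub_cancel]
          exact iht ht1 (by omega) i j hji hin
        · have heq := hτ'b (j + 1) (t + 1) (by omega) (by omega) (by omega) hle (by omega)
          simp only [Nat.add_sub_cancel] at heq
          have hjn : j < n := by omega
          have hs := hstep i j (by omega) hjn hin
          have hcl : ‖(A (j + 1))⁻¹ * C j‖ < 1 := by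
            have h := hclt (j + 1) (by omega) (by omega)
            rwa [Nat.add_sub_cancel] at h
          rcases Nat.eq_zero_or_pos j with hj0 | hj1
          · subst hj0
            rw [heq, hτ'0, mul_zero, sub_zero, div_one]
            simp only [Nat.zero_add] at hs ⊢
            rw [hc1, zero_mul, add_zero] at hs
            exact hs
          · have hih := iht ht1 (by omega) i (j - 1) (by omega) hin
            rw [show j - 1 + 1 = j by omega] at hih
            have hτb := htau t ht1 (by omega) j (by omega)
            rw [heq]
            exact div_bound_aux ‖Zb j i‖ ‖Zb (j + 1) i‖ ‖Zb (j - 1) i‖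
              ‖(A (j + 1))⁻¹ * C j‖ ‖(A (j + 1))⁻¹ * B (j + 1)‖ (τ' j t)
              (norm_nonneg _) (by nlinarith [norm_nonneg ((A (j + 1))⁻¹ * C j)]) hs hih
  -- decay for upper triangle, base case t = 1 (downward induction)
  have hdec1ω : ∀ d j i : ℕ, j + d = n - 1 → i < j → j < n →
      ‖Zb j i‖ ≤ ω' (j + 1) 1 * ‖Zb (j - 1) i‖ := by
    intro d
    induction d with
    | zero =>
      intro j i hd hij hjn
      have hj : j = n - 1 := by omega
      subst hj
      have hs := hstep i (n - 1) (by omega) (by omega) (by omega)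
      rw [show n - 1 + 1 = n by omega] at hs
      rw [hbn0, zero_mul, zero_add] at hs
      have hωv : ω' (n - 1 + 1) 1 = ‖(A n)⁻¹ * C (n - 1)‖ := by
        rw [show n - 1 + 1 = n by omega, hω'1, hω n (by omega) le_rfl, hbn0, sub_zero, div_one]
      rw [hωv]
      exact hs
    | succ d ihd =>
      intro j i hd hij hjn
      have hjn1 : j + 1 < n := by omega
      have hih := ihd (j + 1) i (by omega) (by omega) hjn1
      rw [Nat.add_sub_cancel] at hih
      have hω2 := homega 1 le_rfl (by omega) (j + 2) (by omega) (by omega)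
      have hbl : ‖(A (j + 1))⁻¹ * B (j + 1)‖ < 1 := hblt (j + 1) (by omega) (by omega)
      have hs := hstep i j (by omega) (by omega) (by omega)
      have hz1 : ‖Zb (j + 1) i‖ ≤ 1 * ‖Zb j i‖ := by
        nlinarith [norm_nonneg (Zb j i), hω2.1, hω2.2]
      have hres := div_bound_aux ‖Zb j i‖ ‖Zb (j - 1) i‖ ‖Zb (j + 1) i‖
        ‖(A (j + 1))⁻¹ * B (j + 1)‖ ‖(A (j + 1))⁻¹ * C j‖ 1
        (norm_nonneg _) (by rw [mul_one]; exact hbl) (by linarith) hz1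
      rw [mul_one] at hres
      have hωv : ω' (j + 1) 1 = ‖(A (j + 1))⁻¹ * C j‖ / (1 - ‖(A (j + 1))⁻¹ * B (j + 1)‖) := by
        rw [hω'1, hω (j + 1) (by omega) (by omega), Nat.add_sub_cancel]
      rw [hωv]
      exact hres
  -- decay for upper triangle
  have hdecω : ∀ t, 1 ≤ t → t ≤ n - 1 → ∀ i j : ℕ, i < j → j < n →
      ‖Zb j i‖ ≤ ω' (j + 1) t * ‖Zb (j - 1) i‖ := by
    intro t
    induction t with
    | zero => omega
    | succ t iht =>
      intro _ hle i j hij hjn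
      by_cases ht0 : t = 0
      · subst ht0
        exact hdec1ω (n - 1 - j) j i (by omega) hij hjn
      · have ht1 : 1 ≤ t := by omega
        by_cases hcase : n - (t + 1) + 1 < j + 1
        · rw [hω'a (j + 1) (t + 1) (by omega) (by omega) (by omega) hle hcase,
            Nat.add_sub_cancel]
          exact iht ht1 (by omega) i j hij hjn
        · have heq := hω'b (j + 1) (t + 1) (by omega) (by omega) (by omega) hle (by omega)
          simp only [Nat.add_sub_cancel] at heq
          have hjn1 : j + 1 < n := by omega
          have hih := iht ht1 (by omega) i (j + 1) (by omega) hjn1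
          rw [Nat.add_sub_cancel] at hih
          have hω2 := homega t ht1 (by omega) (j + 2) (by omega) (by omega)
          have hbl : ‖(A (j + 1))⁻¹ * B (j + 1)‖ < 1 := hblt (j + 1) (by omega) (by omega)
          have hs := hstep i j (by omega) (by omega) (by omega)
          rw [heq]
          refine div_bound_aux ‖Zb j i‖ ‖Zb (j - 1) i‖ ‖Zb (j + 1) i‖
            ‖(A (j + 1))⁻¹ * B (j + 1)‖ ‖(A (j + 1))⁻¹ * C j‖ (ω' (j + 2) t)
            (norm_nonneg _) (by nlinarith [norm_nonneg ((A (j + 1))⁻¹ * B (j + 1))])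
            (by linarith) hih
  -- main conclusion
  intro t ht1 htn i hi1 hin
  have hi0 : i - 1 < n := by omega
  have hZii : Z i i = Zb (i - 1) (i - 1) := by
    have h := hZ ⟨i - 1, hi0⟩ ⟨i - 1, hi0⟩
    rw [hZin (i - 1) (i - 1) hi0 hi0]
    have hval : ((⟨i - 1, hi0⟩ : Fin n) : ℕ) + 1 = i := by simp; omega
    rw [hval] at h
    exact h
  have hr := hrow (i - 1) (i - 1) hi0 hi0
  rw [if_pos rfl] at hr
  rw [show i - 1 + 1 = i by omega] at hr
  -- hr : A i * Zb (i-1) (i-1) + B i * Zb i (i-1) + C (i-1) * Zb (i-1-1) (i-1) = 1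
  have hx0 : 0 ≤ ‖Zb (i - 1) (i - 1)‖ := norm_nonneg _
  have hτnn : 0 ≤ τ' (i - 1) t := (htau t ht1 htn (i - 1) (by omega)).1
  have hωnn : 0 ≤ ω' (i + 1) t := (homega t ht1 htn (i + 1) (by omega) (by omega)).1
  have hBterm : ‖B i * Zb i (i - 1)‖ ≤ ω' (i + 1) t * ‖B i‖ * ‖Zb (i - 1) (i - 1)‖ := by
    by_cases hin' : i = n
    · rw [hZout i (i - 1) (Or.inl (by omega)), mul_zero, norm_zero]
      positivity
    · have hd := hdecω t ht1 htn (i - 1) i (by omega) (by omega)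
      calc ‖B i * Zb i (i - 1)‖ ≤ ‖B i‖ * ‖Zb i (i - 1)‖ := norm_mul_le _ _
        _ ≤ ‖B i‖ * (ω' (i + 1) t * ‖Zb (i - 1) (i - 1)‖) :=
            mul_le_mul_of_nonneg_left hd (norm_nonneg _)
        _ = ω' (i + 1) t * ‖B i‖ * ‖Zb (i - 1) (i - 1)‖ := by ring
  have hCterm : ‖C (i - 1) * Zb (i - 1 - 1) (i - 1)‖ ≤
      τ' (i - 1) t * ‖C (i - 1)‖ * ‖Zb (i - 1) (i - 1)‖ := by
    by_cases hi1' : i = 1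
    · subst hi1'
      rw [show (1 : ℕ) - 1 = 0 from rfl, hC0, zero_mul, norm_zero]
      positivity
    · have hd := hdecτ t ht1 htn (i - 1) (i - 1 - 1) (by omega) (by omega)
      rw [show i - 1 - 1 + 1 = i - 1 by omega] at hd
      calc ‖C (i - 1) * Zb (i - 1 - 1) (i - 1)‖ ≤ ‖C (i - 1)‖ * ‖Zb (i - 1 - 1) (i - 1)‖ :=
            norm_mul_le _ _
        _ ≤ ‖C (i - 1)‖ * (τ' (i - 1) t * ‖Zb (i - 1) (i - 1)‖) :=
            mul_le_mul_of_nonneg_left hd (norm_nonneg _)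
        _ = τ' (i - 1) t * ‖C (i - 1)‖ * ‖Zb (i - 1) (i - 1)‖ := by ring
  have hApos : 0 < ‖A i‖ := norm_pos_iff.mpr (hAi i hi1 hin).ne_zero
  have hDpos : 0 < ‖A i‖ + τ' (i - 1) t * ‖C (i - 1)‖ + ω' (i + 1) t * ‖B i‖ := by
    have h1 : 0 ≤ τ' (i - 1) t * ‖C (i - 1)‖ := mul_nonneg hτnn (norm_nonneg _)
    have h2 : 0 ≤ ω' (i + 1) t * ‖B i‖ := mul_nonneg hωnn (norm_nonneg _)
    linarith
  have h1 : ‖(1 : Matrix (Fin m) (Fin m) ℂ)‖ ≤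
      (‖A i‖ + τ' (i - 1) t * ‖C (i - 1)‖ + ω' (i + 1) t * ‖B i‖) * ‖Zb (i - 1) (i - 1)‖ := by
    have he : ‖(1 : Matrix (Fin m) (Fin m) ℂ)‖ =
        ‖A i * Zb (i - 1) (i - 1) + B i * Zb i (i - 1) +
          C (i - 1) * Zb (i - 1 - 1) (i - 1)‖ := by rw [hr]
    rw [he]
    calc ‖A i * Zb (i - 1) (i - 1) + B i * Zb i (i - 1) +
          C (i - 1) * Zb (i - 1 - 1) (i - 1)‖
        ≤ ‖A i * Zb (i - 1) (i - 1) + B i * Zb i (i - 1)‖ +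
            ‖C (i - 1) * Zb (i - 1 - 1) (i - 1)‖ := norm_add_le _ _
      _ ≤ ‖A i * Zb (i - 1) (i - 1)‖ + ‖B i * Zb i (i - 1)‖ +
            ‖C (i - 1) * Zb (i - 1 - 1) (i - 1)‖ := by
            linarith [norm_add_le (A i * Zb (i - 1) (i - 1)) (B i * Zb i (i - 1))]
      _ ≤ ‖A i‖ * ‖Zb (i - 1) (i - 1)‖ + ω' (i + 1) t * ‖B i‖ * ‖Zb (i - 1) (i - 1)‖ +
            τ' (i - 1) t * ‖C (i - 1)‖ * ‖Zb (i - 1) (i - 1)‖ := by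
            linarith [norm_mul_le (A i) (Zb (i - 1) (i - 1)), hBterm, hCterm]
      _ = (‖A i‖ + τ' (i - 1) t * ‖C (i - 1)‖ + ω' (i + 1) t * ‖B i‖) *
            ‖Zb (i - 1) (i - 1)‖ := by ring
  constructor
  · rw [hZii, div_le_iff₀ hDpos, mul_comm]
    exact h1
  · intro hpos
    rw [hZii]
    have hAinvpos : 0 < ‖(A i)⁻¹‖ := norm_pos_iff.mpr (hAiinvU i hi1 hin).ne_zero
    have h2 : ‖Zb (i - 1) (i - 1)‖ = ‖(A i)⁻¹ * (A i * Zb (i - 1) (i - 1))‖ := by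
      rw [← mul_assoc, hAinvmul i hi1 hin, one_mul]
    have h3 : ‖Zb (i - 1) (i - 1)‖ ≤ ‖(A i)⁻¹‖ * ‖A i * Zb (i - 1) (i - 1)‖ :=
      h2 ▸ norm_mul_le _ _
    have hx : ‖(A i)⁻¹‖⁻¹ * ‖Zb (i - 1) (i - 1)‖ ≤ ‖A i * Zb (i - 1) (i - 1)‖ := by
      rw [inv_mul_le_iff₀ hAinvpos]
      exact h3
    have h5 : A i * Zb (i - 1) (i - 1) =
        1 - B i * Zb i (i - 1) - C (i - 1) * Zb (i - 1 - 1) (i - 1) := by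
      rw [← hr]
      abel
    have h4 : ‖A i * Zb (i - 1) (i - 1)‖ ≤ ‖(1 : Matrix (Fin m) (Fin m) ℂ)‖ +
        τ' (i - 1) t * ‖C (i - 1)‖ * ‖Zb (i - 1) (i - 1)‖ +
        ω' (i + 1) t * ‖B i‖ * ‖Zb (i - 1) (i - 1)‖ := by
      rw [h5]
      calc ‖1 - B i * Zb i (i - 1) - C (i - 1) * Zb (i - 1 - 1) (i - 1)‖
          ≤ ‖(1 : Matrix (Fin m) (Fin m) ℂ) - B i * Zb i (i - 1)‖ +
              ‖C (i - 1) * Zb (i - 1 - 1) (i - 1)‖ := norm_sub_le _ _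
        _ ≤ ‖(1 : Matrix (Fin m) (Fin m) ℂ)‖ + ‖B i * Zb i (i - 1)‖ +
              ‖C (i - 1) * Zb (i - 1 - 1) (i - 1)‖ := by
              linarith [norm_sub_le (1 : Matrix (Fin m) (Fin m) ℂ) (B i * Zb i (i - 1))]
        _ ≤ _ := by linarith [hBterm, hCterm]
    rw [le_div_iff₀ hpos]
    nlinarith [le_trans hx h4]
end

section
/- Under the standing assumptions, for each fixed i, the sequences {τ_{i,t}}_{t=1}^{n−1} and {ω_{i,t}}_{t=1}^{n−1} are (weakly) decreasing in t, i.e. τ_{i,t+1} ≤ τ_{i,t} and ω_{i,t+1} ≤ ω_{i,t} for all admissible i and t. -/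
open scoped Matrix
attribute [local instance] Matrix.linftyOpNormedRing

private lemma tau_aux (b c x y : ℝ) (hb : 0 ≤ b) (hc : 0 ≤ c) (hbc : c + b ≤ 1)
    (hx : 0 ≤ x) (hxy : x ≤ y) (hy : y ≤ 1) :
    0 ≤ b / (1 - c * x) ∧ b / (1 - c * x) ≤ 1 ∧ b / (1 - c * x) ≤ b / (1 - c * y) := by
  rcases eq_or_lt_of_le hb with hb0 | hb0
  · simp [← hb0]
  · have hy0 : 0 ≤ y := le_trans hx hxy
    have hcy : c * y ≤ c := by nlinarith
    have hdy : 0 < 1 - c * y := by linarith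
    have hcx : c * x ≤ c * y := by nlinarith
    have hdx : 0 < 1 - c * x := by linarith
    refine ⟨by positivity, ?_, ?_⟩
    · rw [div_le_one hdx]
      linarith
    · gcongr <;> linarith

theorem tau_omega_iter_antitone
    (n m : ℕ) (hn : 2 ≤ n) (hm : 1 ≤ m)
    (A B C : ℕ → Matrix (Fin m) (Fin m) ℂ)
    (hC0 : C 0 = 0) (hBn : B n = 0)
    (hAinv : IsUnit (blockTridiag n m A B C))
    (hB : ∀ i, 1 ≤ i → i ≤ n - 1 → IsUnit (B i))
    (hC : ∀ i, 1 ≤ i → i ≤ n - 1 → IsUnit (C i))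
    (hAi : ∀ i, 1 ≤ i → i ≤ n → IsUnit (A i))
    (hdom : ∀ i, 1 ≤ i → i ≤ n → ‖(A i)⁻¹ * C (i - 1)‖ + ‖(A i)⁻¹ * B i‖ ≤ 1)
    (hB1 : ‖(A 1)⁻¹ * B 1‖ < 1)
    (hCn : ‖(A n)⁻¹ * C (n - 1)‖ < 1)
    (τ : ℕ → ℝ)
    (hτ : ∀ i, 1 ≤ i → i ≤ n → τ i = ‖(A i)⁻¹ * B i‖ / (1 - ‖(A i)⁻¹ * C (i - 1)‖))
    (ω : ℕ → ℝ)
    (hω : ∀ i, 1 ≤ i → i ≤ n → ω i = ‖(A i)⁻¹ * C (i - 1)‖ / (1 - ‖(A i)⁻¹ * B i‖))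
    (τ' : ℕ → ℕ → ℝ)
    (hτ'1 : ∀ i, τ' i 1 = τ i)
    (hτ'0 : ∀ t, τ' 0 t = 0)
    (hτ'a : ∀ i t, 1 ≤ i → i ≤ n → 2 ≤ t → t ≤ n - 1 → i < t → τ' i t = τ' i (t - 1))
    (hτ'b : ∀ i t, 1 ≤ i → i ≤ n → 2 ≤ t → t ≤ n - 1 → t ≤ i →
      τ' i t = ‖(A i)⁻¹ * B i‖ / (1 - ‖(A i)⁻¹ * C (i - 1)‖ * τ' (i - 1) (t - 1)))
    (ω' : ℕ → ℕ → ℝ)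
    (hω'1 : ∀ i, ω' i 1 = ω i)
    (hω'n : ∀ t, ω' (n + 1) t = 0)
    (hω'a : ∀ i t, 1 ≤ i → i ≤ n → 2 ≤ t → t ≤ n - 1 → n - t + 1 < i → ω' i t = ω' i (t - 1))
    (hω'b : ∀ i t, 1 ≤ i → i ≤ n → 2 ≤ t → t ≤ n - 1 → i ≤ n - t + 1 →
      ω' i t = ‖(A i)⁻¹ * C (i - 1)‖ / (1 - ‖(A i)⁻¹ * B i‖ * ω' (i + 1) (t - 1))) :
    ∀ i t, 1 ≤ i → i ≤ n → 1 ≤ t → t ≤ n - 2 →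
      τ' i (t + 1) ≤ τ' i t ∧ ω' i (t + 1) ≤ ω' i t := by
  have key : ∀ t, 1 ≤ t → t ≤ n - 1 → ∀ i, 1 ≤ i → i ≤ n →
      ((0 ≤ τ' i t ∧ τ' i t ≤ 1) ∧ (0 ≤ ω' i t ∧ ω' i t ≤ 1)) ∧
      (2 ≤ t → τ' i t ≤ τ' i (t - 1) ∧ ω' i t ≤ ω' i (t - 1)) := by
    intro t
    induction t using Nat.strong_induction_on with
    | _ t IH =>
    intro ht1 htn i hi1 hin
    rcases Nat.lt_or_ge t 2 with ht2 | ht2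
    · obtain rfl : t = 1 := by omega
      have Hτ := tau_aux ‖(A i)⁻¹ * B i‖ ‖(A i)⁻¹ * C (i-1)‖ 1 1
        (norm_nonneg _) (norm_nonneg _) (hdom i hi1 hin) zero_le_one le_rfl le_rfl
      have Hω := tau_aux ‖(A i)⁻¹ * C (i-1)‖ ‖(A i)⁻¹ * B i‖ 1 1
        (norm_nonneg _) (norm_nonneg _) (by linarith [hdom i hi1 hin]) zero_le_one le_rfl le_rfl
      rw [mul_one] at Hτ Hω
      rw [hτ'1 i, hω'1 i, hτ i hi1 hin, hω i hi1 hin]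
      exact ⟨⟨⟨Hτ.1, Hτ.2.1⟩, ⟨Hω.1, Hω.2.1⟩⟩, fun h => absurd h (by omega)⟩
    · obtain ⟨s, rfl⟩ : ∃ s, t = s + 1 := ⟨t - 1, by omega⟩
      have hs1 : 1 ≤ s := by omega
      have hsn : s ≤ n - 1 := by omega
      have IHi := IH s (by omega) hs1 hsn i hi1 hin
      have hτpart : (0 ≤ τ' i (s+1) ∧ τ' i (s+1) ≤ 1) ∧ τ' i (s+1) ≤ τ' i s := by
        by_cases hti : s + 1 ≤ i
        · have hi2 : 2 ≤ i := by omega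
          have IHp := IH s (by omega) hs1 hsn (i-1) (by omega) (by omega)
          have e1 : τ' i (s+1) = ‖(A i)⁻¹ * B i‖ / (1 - ‖(A i)⁻¹ * C (i-1)‖ * τ' (i-1) s) := by
            have := hτ'b i (s+1) hi1 hin (by omega) htn hti
            simpa using this
          rcases Nat.lt_or_ge s 2 with hs2 | hs2
          · obtain rfl : s = 1 := by omega
            have e2 : τ' i 1 = ‖(A i)⁻¹ * B i‖ / (1 - ‖(A i)⁻¹ * C (i-1)‖ * 1) := by
              rw [hτ'1 i, hτ i hi1 hin, mul_one]
            have H := tau_aux _ _ (τ' (i-1) 1) 1 (norm_nonneg _) (norm_nonneg _)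
              (hdom i hi1 hin) IHp.1.1.1 IHp.1.1.2 le_rfl
            rw [e1, e2]
            exact ⟨⟨H.1, H.2.1⟩, H.2.2⟩
          · have e2 : τ' i s = ‖(A i)⁻¹ * B i‖ / (1 - ‖(A i)⁻¹ * C (i-1)‖ * τ' (i-1) (s-1)) :=
              hτ'b i s hi1 hin hs2 (by omega) (by omega)
            have IHp' := IH (s-1) (by omega) (by omega) (by omega) (i-1) (by omega) (by omega)
            have H := tau_aux _ _ (τ' (i-1) s) (τ' (i-1) (s-1)) (norm_nonneg _) (norm_nonneg _)
              (hdom i hi1 hin) IHp.1.1.1 (IHp.2 hs2).1 IHp'.1.1.2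
            rw [e1, e2]
            exact ⟨⟨H.1, H.2.1⟩, H.2.2⟩
        · have e1 : τ' i (s+1) = τ' i s := by
            have := hτ'a i (s+1) hi1 hin (by omega) htn (by omega)
            simpa using this
          rw [e1]
          exact ⟨IHi.1.1, le_rfl⟩
      have hωpart : (0 ≤ ω' i (s+1) ∧ ω' i (s+1) ≤ 1) ∧ ω' i (s+1) ≤ ω' i s := by
        by_cases hti : i ≤ n - (s+1) + 1
        · have hin' : i + 1 ≤ n := by omega
          have IHp := IH s (by omega) hs1 hsn (i+1) (by omega) hin'
          have e1 : ω' i (s+1) = ‖(A i)⁻¹ * C (i-1)‖ / (1 - ‖(A i)⁻¹ * B i‖ * ω' (i+1) s) := by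
            have := hω'b i (s+1) hi1 hin (by omega) htn hti
            simpa using this
          have hdom' : ‖(A i)⁻¹ * B i‖ + ‖(A i)⁻¹ * C (i-1)‖ ≤ 1 := by
            linarith [hdom i hi1 hin]
          rcases Nat.lt_or_ge s 2 with hs2 | hs2
          · obtain rfl : s = 1 := by omega
            have e2 : ω' i 1 = ‖(A i)⁻¹ * C (i-1)‖ / (1 - ‖(A i)⁻¹ * B i‖ * 1) := by
              rw [hω'1 i, hω i hi1 hin, mul_one]
            have H := tau_aux _ _ (ω' (i+1) 1) 1 (norm_nonneg _) (norm_nonneg _)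
              hdom' IHp.1.2.1 IHp.1.2.2 le_rfl
            rw [e1, e2]
            exact ⟨⟨H.1, H.2.1⟩, H.2.2⟩
          · have e2 : ω' i s = ‖(A i)⁻¹ * C (i-1)‖ / (1 - ‖(A i)⁻¹ * B i‖ * ω' (i+1) (s-1)) :=
              hω'b i s hi1 hin hs2 hsn (by omega)
            have IHp' := IH (s-1) (by omega) (by omega) (by omega) (i+1) (by omega) hin'
            have H := tau_aux _ _ (ω' (i+1) s) (ω' (i+1) (s-1)) (norm_nonneg _) (norm_nonneg _)
              hdom' IHp.1.2.1 (IHp.2 hs2).2 IHp'.1.2.2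
            rw [e1, e2]
            exact ⟨⟨H.1, H.2.1⟩, H.2.2⟩
        · have e1 : ω' i (s+1) = ω' i s := by
            have := hω'a i (s+1) hi1 hin (by omega) htn (by omega)
            simpa using this
          rw [e1]
          exact ⟨IHi.1.2, le_rfl⟩
      refine ⟨⟨hτpart.1, hωpart.1⟩, fun _ => ?_⟩
      simpa using ⟨hτpart.2, hωpart.2⟩
  intro i t hi1 hin ht1 htn2
  have H := key (t+1) (by omega) (by omega) i hi1 hin
  simp only [Nat.add_sub_cancel] at H
  exact H.2 (by omega)
end

section
/- Under the standing assumptions, set ρ_{1,t} = max_i τ_{i,t} and ρ_{2,t} = max_i ω_{i,t} for each t = 1,…,n−1. Then the blocks Z_{ij} of the inverse A⁻¹ satisfy ‖Z_{ij}‖ ≤ ρ_{1,t}^{j−i} ‖Z_{jj}‖ for all i < j, and ‖Z_{ij}‖ ≤ ρ_{2,t}^{i−j} ‖Z_{jj}‖ for all i > j, for each t = 1,…,n−1. -/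
open scoped Matrix
attribute [local instance] Matrix.linftyOpNormedRing

lemma blockTridiag_blockEq (n m : ℕ) (hn : 2 ≤ n)
    (A B C : ℕ → Matrix (Fin m) (Fin m) ℂ)
    (hC0 : C 0 = 0) (hBn : B n = 0)
    (hAinv : IsUnit (blockTridiag n m A B C))
    (Z : ℕ → ℕ → Matrix (Fin m) (Fin m) ℂ)
    (hZ : ∀ i j : Fin n, Z ((i : ℕ) + 1) ((j : ℕ) + 1) =
      Matrix.of fun k l => (blockTridiag n m A B C)⁻¹ (i, k) (j, l))
    (i j : ℕ) (hi1 : 1 ≤ i) (hin : i ≤ n) (hj1 : 1 ≤ j) (hjn : j ≤ n) :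
    C (i - 1) * Z (i - 1) j + A i * Z i j + B i * Z (i + 1) j
      = if i = j then 1 else 0 := by
  classical
  set T := blockTridiag n m A B C with hT
  have hdet : IsUnit T.det := (Matrix.isUnit_iff_isUnit_det _).mp hAinv
  have hTT : T * T⁻¹ = 1 := Matrix.mul_nonsing_inv _ hdet
  set fi : Fin n := ⟨i - 1, by omega⟩ with hfi
  set fj : Fin n := ⟨j - 1, by omega⟩ with hfj
  have hfiv : (fi : ℕ) = i - 1 := rfl
  have hfjv : (fj : ℕ) = j - 1 := rfl
  have hZij : Z i j = Matrix.of fun k l => T⁻¹ (fi, k) (fj, l) := by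
    have := hZ fi fj
    rwa [hfiv, hfjv, show i - 1 + 1 = i by omega, show j - 1 + 1 = j by omega] at this
  ext k l
  have key : (T * T⁻¹) (fi, k) (fj, l) = (1 : Matrix (Fin n × Fin m) (Fin n × Fin m) ℂ) (fi, k) (fj, l) := by
    rw [hTT]
  rw [Matrix.mul_apply] at key
  rw [Fintype.sum_prod_type] at key
  have split : ∀ r : Fin n, (∑ s : Fin m, T (fi, k) (r, s) * T⁻¹ (r, s) (fj, l)) =
      (if fi = r then ∑ s : Fin m, A i k s * T⁻¹ (r, s) (fj, l) else 0)
      + (if (r : ℕ) = i then ∑ s : Fin m, B i k s * T⁻¹ (r, s) (fj, l) else 0)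
      + (if (r : ℕ) + 1 = i - 1 then ∑ s : Fin m, C (i - 1) k s * T⁻¹ (r, s) (fj, l) else 0) := by
    intro r
    have hTval : ∀ s : Fin m, T (fi, k) (r, s) =
        if fi = r then A ((fi : ℕ) + 1) k s
        else if (fi : ℕ) + 1 = (r : ℕ) then B ((fi : ℕ) + 1) k s
        else if (r : ℕ) + 1 = (fi : ℕ) then C ((r : ℕ) + 1) k s else 0 := fun s => rfl
    have hi' : (fi : ℕ) + 1 = i := by omega
    by_cases h1 : fi = r
    · have hr : (r : ℕ) = i - 1 := by rw [← h1]
      rw [if_pos h1, if_neg (by omega), if_neg (by omega), add_zero, add_zero]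
      refine Finset.sum_congr rfl fun s _ => ?_
      rw [hTval s, if_pos h1, hi']
    · by_cases h2 : (r : ℕ) = i
      · rw [if_neg h1, if_pos h2, if_neg (by omega), zero_add, add_zero]
        refine Finset.sum_congr rfl fun s _ => ?_
        rw [hTval s, if_neg h1, if_pos (by omega), hi']
      · by_cases h3 : (r : ℕ) + 1 = i - 1
        · rw [if_neg h1, if_neg h2, if_pos h3, zero_add, zero_add]
          refine Finset.sum_congr rfl fun s _ => ?_
          rw [hTval s, if_neg h1, if_neg (by omega), if_pos (by omega),
            show (r : ℕ) + 1 = i - 1 from h3]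
        · have h1' : ¬ ((fi : ℕ) = (r : ℕ)) := fun h => h1 (Fin.ext h)
          rw [if_neg h1, if_neg h2, if_neg h3, add_zero, add_zero]
          refine Finset.sum_eq_zero fun s _ => ?_
          rw [hTval s, if_neg h1, if_neg (by omega), if_neg (by omega), zero_mul]
  rw [Finset.sum_congr rfl fun r _ => split r] at key
  rw [Finset.sum_add_distrib, Finset.sum_add_distrib] at key
  have S1 : (∑ r : Fin n, if fi = r then ∑ s : Fin m, A i k s * T⁻¹ (r, s) (fj, l) else 0)
      = (A i * Z i j) k l := by
    rw [Finset.sum_ite_eq, if_pos (Finset.mem_univ _), Matrix.mul_apply, hZij]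
    rfl
  have S2 : (∑ r : Fin n, if (r : ℕ) = i then ∑ s : Fin m, B i k s * T⁻¹ (r, s) (fj, l) else 0)
      = (B i * Z (i + 1) j) k l := by
    by_cases hi : i < n
    · have hZi : Z (i + 1) j = Matrix.of fun k l => T⁻¹ (⟨i, hi⟩, k) (fj, l) := by
        have := hZ ⟨i, hi⟩ fj
        rwa [hfjv, show j - 1 + 1 = j by omega] at this
      rw [Finset.sum_eq_single (⟨i, hi⟩ : Fin n)]
      · rw [if_pos rfl, Matrix.mul_apply, hZi]; rfl
      · intro r _ hr
        exact if_neg fun h => hr (Fin.ext h)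
      · intro h; exact absurd (Finset.mem_univ _) h
    · have hin' : i = n := by omega
      rw [Finset.sum_eq_zero, hin', hBn, zero_mul, Matrix.zero_apply]
      intro r _
      exact if_neg (by omega)
  have S3 : (∑ r : Fin n, if (r : ℕ) + 1 = i - 1 then ∑ s : Fin m, C (i - 1) k s * T⁻¹ (r, s) (fj, l) else 0)
      = (C (i - 1) * Z (i - 1) j) k l := by
    by_cases hi : 2 ≤ i
    · have hlt : i - 2 < n := by omega
      have hZi : Z (i - 1) j = Matrix.of fun k l => T⁻¹ (⟨i - 2, hlt⟩, k) (fj, l) := by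
        have := hZ ⟨i - 2, hlt⟩ fj
        rwa [hfjv, show j - 1 + 1 = j by omega, show i - 2 + 1 = i - 1 by omega] at this
      rw [Finset.sum_eq_single (⟨i - 2, hlt⟩ : Fin n)]
      · rw [if_pos (by simp; omega), Matrix.mul_apply, hZi]; rfl
      · intro r _ hr
        refine if_neg fun h => hr (Fin.ext ?_)
        simp only [Fin.val_mk]; omega
      · intro h; exact absurd (Finset.mem_univ _) h
    · have hi1' : i = 1 := by omega
      rw [Finset.sum_eq_zero, hi1', show (1:ℕ) - 1 = 0 from rfl, hC0, zero_mul, Matrix.zero_apply]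
      intro r _
      exact if_neg (by omega)
  rw [S1, S2, S3] at key
  have RHS : (1 : Matrix (Fin n × Fin m) (Fin n × Fin m) ℂ) (fi, k) (fj, l)
      = (if i = j then (1 : Matrix (Fin m) (Fin m) ℂ) else 0) k l := by
    by_cases hij : i = j
    · have : fi = fj := Fin.ext (by omega)
      rw [if_pos hij, Matrix.one_apply, this, Matrix.one_apply]
      by_cases hkl : k = l
      · rw [if_pos hkl, if_pos (by rw [hkl])]
      · rw [if_neg hkl, if_neg (by simp [hkl])]
    · have : fi ≠ fj := fun h => hij (by have := Fin.val_eq_val fi fj |>.mpr h; omega)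
      rw [if_neg hij, Matrix.one_apply_ne (by simp [this]), Matrix.zero_apply]
  rw [RHS] at key
  simpa [Matrix.add_apply, add_comm, add_left_comm, add_assoc] using key

theorem decay_bounds_rho
    (n m : ℕ) (hn : 2 ≤ n) (hm : 1 ≤ m)
    (A B C : ℕ → Matrix (Fin m) (Fin m) ℂ)
    (hC0 : C 0 = 0) (hBn : B n = 0)
    (hAinv : IsUnit (blockTridiag n m A B C))
    (hB : ∀ i, 1 ≤ i → i ≤ n - 1 → IsUnit (B i))
    (hC : ∀ i, 1 ≤ i → i ≤ n - 1 → IsUnit (C i))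
    (hAi : ∀ i, 1 ≤ i → i ≤ n → IsUnit (A i))
    (hdom : ∀ i, 1 ≤ i → i ≤ n → ‖(A i)⁻¹ * C (i - 1)‖ + ‖(A i)⁻¹ * B i‖ ≤ 1)
    (hB1 : ‖(A 1)⁻¹ * B 1‖ < 1)
    (hCn : ‖(A n)⁻¹ * C (n - 1)‖ < 1)
    (τ : ℕ → ℝ)
    (hτ : ∀ i, 1 ≤ i → i ≤ n → τ i = ‖(A i)⁻¹ * B i‖ / (1 - ‖(A i)⁻¹ * C (i - 1)‖))
    (ω : ℕ → ℝ)
    (hω : ∀ i, 1 ≤ i → i ≤ n → ω i = ‖(A i)⁻¹ * C (i - 1)‖ / (1 - ‖(A i)⁻¹ * B i‖))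
    (τ' : ℕ → ℕ → ℝ)
    (hτ'1 : ∀ i, τ' i 1 = τ i)
    (hτ'0 : ∀ t, τ' 0 t = 0)
    (hτ'a : ∀ i t, 1 ≤ i → i ≤ n → 2 ≤ t → t ≤ n - 1 → i < t → τ' i t = τ' i (t - 1))
    (hτ'b : ∀ i t, 1 ≤ i → i ≤ n → 2 ≤ t → t ≤ n - 1 → t ≤ i →
      τ' i t = ‖(A i)⁻¹ * B i‖ / (1 - ‖(A i)⁻¹ * C (i - 1)‖ * τ' (i - 1) (t - 1)))
    (ω' : ℕ → ℕ → ℝ)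
    (hω'1 : ∀ i, ω' i 1 = ω i)
    (hω'n : ∀ t, ω' (n + 1) t = 0)
    (hω'a : ∀ i t, 1 ≤ i → i ≤ n → 2 ≤ t → t ≤ n - 1 → n - t + 1 < i → ω' i t = ω' i (t - 1))
    (hω'b : ∀ i t, 1 ≤ i → i ≤ n → 2 ≤ t → t ≤ n - 1 → i ≤ n - t + 1 →
      ω' i t = ‖(A i)⁻¹ * C (i - 1)‖ / (1 - ‖(A i)⁻¹ * B i‖ * ω' (i + 1) (t - 1)))
    (Z : ℕ → ℕ → Matrix (Fin m) (Fin m) ℂ)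
    (hZ : ∀ i j : Fin n, Z ((i : ℕ) + 1) ((j : ℕ) + 1) =
      Matrix.of fun k l => (blockTridiag n m A B C)⁻¹ (i, k) (j, l)) :
    ∀ t, 1 ≤ t → t ≤ n - 1 →
      (∀ i j, 1 ≤ i → i < j → j ≤ n →
        ‖Z i j‖ ≤ ((Finset.Icc 1 n).sup' (Finset.nonempty_Icc.mpr (by omega)) fun k => τ' k t) ^ (j - i) * ‖Z j j‖) ∧
      (∀ i j, 1 ≤ j → j < i → i ≤ n →
        ‖Z i j‖ ≤ ((Finset.Icc 1 n).sup' (Finset.nonempty_Icc.mpr (by omega)) fun k => ω' k t) ^ (i - j) * ‖Z j j‖) := by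
  haveI : Nonempty (Fin m) := ⟨⟨0, by omega⟩⟩
  -- basic positivity facts
  have hAiU : ∀ i, 1 ≤ i → i ≤ n → IsUnit ((A i)⁻¹) := fun i h1 h2 =>
    Matrix.isUnit_nonsing_inv_iff.mpr (hAi i h1 h2)
  have posB : ∀ i, 1 ≤ i → i ≤ n - 1 → 0 < ‖(A i)⁻¹ * B i‖ := by
    intro i h1 h2
    have hu : IsUnit ((A i)⁻¹ * B i) := (hAiU i h1 (by omega)).mul (hB i h1 h2)
    exact norm_pos_iff.mpr hu.ne_zero
  have posC : ∀ i, 2 ≤ i → i ≤ n → 0 < ‖(A i)⁻¹ * C (i - 1)‖ := by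
    intro i h1 h2
    have hu : IsUnit ((A i)⁻¹ * C (i - 1)) :=
      (hAiU i (by omega) h2).mul (hC (i - 1) (by omega) (by omega))
    exact norm_pos_iff.mpr hu.ne_zero
  have hCA : ∀ i, 1 ≤ i → i ≤ n → ‖(A i)⁻¹ * C (i - 1)‖ < 1 := by
    intro i h1 h2
    rcases eq_or_lt_of_le h2 with h | h
    · rw [h]; exact hCn
    · have := posB i h1 (by omega)
      have := hdom i h1 h2
      linarith
  have hBA : ∀ i, 1 ≤ i → i ≤ n → ‖(A i)⁻¹ * B i‖ < 1 := by
    intro i h1 h2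
    rcases eq_or_lt_of_le h1 with h | h
    · rw [← h]; exact hB1
    · have := posC i (by omega) h2
      have := hdom i h1 h2
      linarith
  -- the fundamental recurrence from the matrix identity
  have normRec : ∀ i j, 1 ≤ i → i ≤ n → 1 ≤ j → j ≤ n → i ≠ j →
      ‖Z i j‖ ≤ ‖(A i)⁻¹ * C (i - 1)‖ * ‖Z (i - 1) j‖ + ‖(A i)⁻¹ * B i‖ * ‖Z (i + 1) j‖ := by
    intro i j h1 h2 h3 h4 hij
    have heq' := blockTridiag_blockEq n m hn A B C hC0 hBn hAinv Z hZ i j h1 h2 h3 h4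
    rw [if_neg hij] at heq'
    have hdet : IsUnit (A i).det := (Matrix.isUnit_iff_isUnit_det _).mp (hAi i h1 h2)
    have h5 : A i * Z i j = -(C (i - 1) * Z (i - 1) j) - B i * Z (i + 1) j := by
      calc A i * Z i j
          = (C (i - 1) * Z (i - 1) j + A i * Z i j + B i * Z (i + 1) j)
            - C (i - 1) * Z (i - 1) j - B i * Z (i + 1) j := by abel
        _ = -(C (i - 1) * Z (i - 1) j) - B i * Z (i + 1) j := by rw [heq']; abel
    have hfinal : Z i j = -((A i)⁻¹ * C (i - 1) * Z (i - 1) j + (A i)⁻¹ * B i * Z (i + 1) j) := by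
      calc Z i j = (A i)⁻¹ * (A i * Z i j) := by
            rw [← Matrix.mul_assoc, Matrix.nonsing_inv_mul _ hdet, Matrix.one_mul]
        _ = (A i)⁻¹ * (-(C (i - 1) * Z (i - 1) j) - B i * Z (i + 1) j) := by rw [h5]
        _ = -((A i)⁻¹ * C (i - 1) * Z (i - 1) j + (A i)⁻¹ * B i * Z (i + 1) j) := by
            rw [Matrix.mul_sub, Matrix.mul_neg, Matrix.mul_assoc, Matrix.mul_assoc]; abel
    calc ‖Z i j‖ = ‖(A i)⁻¹ * C (i - 1) * Z (i - 1) j + (A i)⁻¹ * B i * Z (i + 1) j‖ := by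
          rw [hfinal, norm_neg]
      _ ≤ ‖(A i)⁻¹ * C (i - 1) * Z (i - 1) j‖ + ‖(A i)⁻¹ * B i * Z (i + 1) j‖ := norm_add_le _ _
      _ ≤ ‖(A i)⁻¹ * C (i - 1)‖ * ‖Z (i - 1) j‖ + ‖(A i)⁻¹ * B i‖ * ‖Z (i + 1) j‖ :=
          add_le_add (norm_mul_le _ _) (norm_mul_le _ _)
  -- facts about τ'
  have tauFacts : ∀ t, 1 ≤ t → t ≤ n - 1 → ∀ i, 1 ≤ i → i ≤ n → 0 ≤ τ' i t ∧ τ' i t ≤ 1 := by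
    intro t ht
    induction t, ht using Nat.le_induction with
    | base =>
      intro _ i h1 h2
      have hc := hCA i h1 h2
      have hd : (0:ℝ) < 1 - ‖(A i)⁻¹ * C (i - 1)‖ := by linarith
      rw [hτ'1, hτ i h1 h2]
      constructor
      · exact div_nonneg (norm_nonneg _) hd.le
      · rw [div_le_one hd]
        have := hdom i h1 h2
        linarith
    | succ t ht IH =>
      intro htn i h1 h2
      by_cases hit : i < t + 1
      · rw [hτ'a i (t + 1) h1 h2 (by omega) htn hit, Nat.add_sub_cancel]
        exact IH (by omega) i h1 h2
      · rw [hτ'b i (t + 1) h1 h2 (by omega) htn (by omega), Nat.add_sub_cancel]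
        obtain ⟨hp1, hp2⟩ := IH (by omega) (i - 1) (by omega) (by omega)
        have hc := hCA i h1 h2
        have hcn := norm_nonneg ((A i)⁻¹ * C (i - 1))
        have hprod : ‖(A i)⁻¹ * C (i - 1)‖ * τ' (i - 1) t ≤ ‖(A i)⁻¹ * C (i - 1)‖ :=
          mul_le_of_le_one_right hcn hp2
        have hprod0 : 0 ≤ ‖(A i)⁻¹ * C (i - 1)‖ * τ' (i - 1) t := mul_nonneg hcn hp1
        have hd : (0:ℝ) < 1 - ‖(A i)⁻¹ * C (i - 1)‖ * τ' (i - 1) t := by linarith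
        constructor
        · exact div_nonneg (norm_nonneg _) hd.le
        · rw [div_le_one hd]
          have := hdom i h1 h2
          linarith
  -- facts about ω'
  have omegaFacts : ∀ t, 1 ≤ t → t ≤ n - 1 → ∀ i, 1 ≤ i → i ≤ n → 0 ≤ ω' i t ∧ ω' i t ≤ 1 := by
    intro t ht
    induction t, ht using Nat.le_induction with
    | base =>
      intro _ i h1 h2
      have hc := hBA i h1 h2
      have hd : (0:ℝ) < 1 - ‖(A i)⁻¹ * B i‖ := by linarith
      rw [hω'1, hω i h1 h2]
      constructor
      · exact div_nonneg (norm_nonneg _) hd.le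
      · rw [div_le_one hd]
        have := hdom i h1 h2
        linarith
    | succ t ht IH =>
      intro htn i h1 h2
      by_cases hit : n - (t + 1) + 1 < i
      · rw [hω'a i (t + 1) h1 h2 (by omega) htn hit, Nat.add_sub_cancel]
        exact IH (by omega) i h1 h2
      · rw [hω'b i (t + 1) h1 h2 (by omega) htn (by omega), Nat.add_sub_cancel]
        obtain ⟨hp1, hp2⟩ := IH (by omega) (i + 1) (by omega) (by omega)
        have hc := hBA i h1 h2
        have hcn := norm_nonneg ((A i)⁻¹ * B i)
        have hprod : ‖(A i)⁻¹ * B i‖ * ω' (i + 1) t ≤ ‖(A i)⁻¹ * B i‖ :=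
          mul_le_of_le_one_right hcn hp2
        have hprod0 : 0 ≤ ‖(A i)⁻¹ * B i‖ * ω' (i + 1) t := mul_nonneg hcn hp1
        have hd : (0:ℝ) < 1 - ‖(A i)⁻¹ * B i‖ * ω' (i + 1) t := by linarith
        constructor
        · exact div_nonneg (norm_nonneg _) hd.le
        · rw [div_le_one hd]
          have := hdom i h1 h2
          linarith
  -- one-step bounds
  have tauStep : ∀ i j s, 2 ≤ i → i < j → j ≤ n → 0 ≤ s → s ≤ 1 →
      ‖Z (i - 1) j‖ ≤ s * ‖Z i j‖ →
      ‖Z i j‖ ≤ (‖(A i)⁻¹ * B i‖ / (1 - ‖(A i)⁻¹ * C (i - 1)‖ * s)) * ‖Z (i + 1) j‖ := by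
    intro i j s h2i hij hjn hs0 hs1 hrec
    have hN := normRec i j (by omega) (by omega) (by omega) hjn (by omega)
    have hc := hCA i (by omega) (by omega)
    have hcn := norm_nonneg ((A i)⁻¹ * C (i - 1))
    have hzn := norm_nonneg (Z i j)
    have hd : (0:ℝ) < 1 - ‖(A i)⁻¹ * C (i - 1)‖ * s := by nlinarith
    rw [div_mul_eq_mul_div, le_div_iff₀ hd]
    have hchain : ‖(A i)⁻¹ * C (i - 1)‖ * ‖Z (i - 1) j‖ ≤
        ‖(A i)⁻¹ * C (i - 1)‖ * (s * ‖Z i j‖) := mul_le_mul_of_nonneg_left hrec hcn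
    nlinarith
  have omegaStep : ∀ i j s, 1 ≤ j → j < i → i ≤ n → 0 ≤ s → s ≤ 1 →
      ‖Z (i + 1) j‖ ≤ s * ‖Z i j‖ →
      ‖Z i j‖ ≤ (‖(A i)⁻¹ * C (i - 1)‖ / (1 - ‖(A i)⁻¹ * B i‖ * s)) * ‖Z (i - 1) j‖ := by
    intro i j s hj1 hij hin hs0 hs1 hrec
    have hN := normRec i j (by omega) hin hj1 (by omega) (by omega)
    have hc := hBA i (by omega) hin
    have hcn := norm_nonneg ((A i)⁻¹ * B i)
    have hzn := norm_nonneg (Z i j)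
    have hd : (0:ℝ) < 1 - ‖(A i)⁻¹ * B i‖ * s := by nlinarith
    rw [div_mul_eq_mul_div, le_div_iff₀ hd]
    have hchain : ‖(A i)⁻¹ * B i‖ * ‖Z (i + 1) j‖ ≤
        ‖(A i)⁻¹ * B i‖ * (s * ‖Z i j‖) := mul_le_mul_of_nonneg_left hrec hcn
    nlinarith
  -- single-factor decay for τ'
  have tauBound : ∀ t, 1 ≤ t → t ≤ n - 1 → ∀ i j, 1 ≤ i → i < j → j ≤ n →
      ‖Z i j‖ ≤ τ' i t * ‖Z (i + 1) j‖ := by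
    intro t ht
    induction t, ht using Nat.le_induction with
    | base =>
      intro htn i j h1 hij hjn
      have key : ∀ i, 1 ≤ i → ∀ j, i < j → j ≤ n → ‖Z i j‖ ≤ τ' i 1 * ‖Z (i + 1) j‖ := by
        intro i h1
        induction i, h1 using Nat.le_induction with
        | base =>
          intro j hij hjn
          have hN := normRec 1 j (by omega) (by omega) (by omega) hjn (by omega)
          rw [show (1:ℕ) - 1 = 0 from rfl, hC0, Matrix.mul_zero, norm_zero, zero_mul, zero_add] at hN
          have hτ1 : τ' 1 1 = ‖(A 1)⁻¹ * B 1‖ := by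
            rw [hτ'1, hτ 1 (by omega) (by omega), show (1:ℕ) - 1 = 0 from rfl, hC0,
              Matrix.mul_zero, norm_zero, sub_zero, div_one]
          rw [hτ1]
          exact hN
        | succ i hi IH =>
          intro j hij hjn
          have hrec : ‖Z i j‖ ≤ τ' i 1 * ‖Z (i + 1) j‖ := IH j (by omega) hjn
          obtain ⟨hf0, hf1⟩ := tauFacts 1 (by omega) (by omega) i hi (by omega)
          have hstep := tauStep (i + 1) j (τ' i 1) (by omega) hij hjn hf0 hf1 hrec
          have hc := hCA (i + 1) (by omega) (by omega)
          have hcn := norm_nonneg ((A (i + 1))⁻¹ * C (i + 1 - 1))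
          have hτeq : τ' (i + 1) 1 = ‖(A (i + 1))⁻¹ * B (i + 1)‖ /
              (1 - ‖(A (i + 1))⁻¹ * C (i + 1 - 1)‖) := by
            rw [hτ'1, hτ (i + 1) (by omega) (by omega)]
          have hdenle : 1 - ‖(A (i + 1))⁻¹ * C (i + 1 - 1)‖ ≤
              1 - ‖(A (i + 1))⁻¹ * C (i + 1 - 1)‖ * τ' i 1 := by nlinarith
          have hdiv : ‖(A (i + 1))⁻¹ * B (i + 1)‖ / (1 - ‖(A (i + 1))⁻¹ * C (i + 1 - 1)‖ * τ' i 1)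
              ≤ τ' (i + 1) 1 := by
            rw [hτeq]
            exact div_le_div_of_nonneg_left (norm_nonneg _) (by linarith) hdenle
          calc ‖Z (i + 1) j‖ ≤ (‖(A (i + 1))⁻¹ * B (i + 1)‖ /
                (1 - ‖(A (i + 1))⁻¹ * C (i + 1 - 1)‖ * τ' i 1)) * ‖Z (i + 1 + 1) j‖ := hstep
            _ ≤ τ' (i + 1) 1 * ‖Z (i + 1 + 1) j‖ :=
                mul_le_mul_of_nonneg_right hdiv (norm_nonneg _)
      exact key i h1 j hij hjn
    | succ t ht IH =>
      intro htn i j h1 hij hjn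
      by_cases hit : i < t + 1
      · rw [hτ'a i (t + 1) h1 (by omega) (by omega) htn hit, Nat.add_sub_cancel]
        exact IH (by omega) i j h1 hij hjn
      · have h2i : 2 ≤ i := by omega
        have hrec0 := IH (by omega) (i - 1) j (by omega) (by omega) hjn
        rw [show i - 1 + 1 = i by omega] at hrec0
        obtain ⟨hf0, hf1⟩ := tauFacts t (by omega) (by omega) (i - 1) (by omega) (by omega)
        have hstep := tauStep i j (τ' (i - 1) t) h2i hij hjn hf0 hf1 hrec0
        rw [hτ'b i (t + 1) h1 (by omega) (by omega) htn (by omega), Nat.add_sub_cancel]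
        exact hstep
  -- single-factor decay for ω'
  have omegaBound : ∀ t, 1 ≤ t → t ≤ n - 1 → ∀ i j, 1 ≤ j → j < i → i ≤ n →
      ‖Z i j‖ ≤ ω' i t * ‖Z (i - 1) j‖ := by
    intro t ht
    induction t, ht using Nat.le_induction with
    | base =>
      intro htn i j hj1 hij hin
      have key : ∀ d i, i = n - d → ∀ j, 1 ≤ j → j < i → ‖Z i j‖ ≤ ω' i 1 * ‖Z (i - 1) j‖ := by
        intro d
        induction d with
        | zero =>
          intro i hi j hj1 hij
          have hieq : i = n := by omega
          subst hieq
          have hN := normRec i j (by omega) (by omega) hj1 (by omega) (by omega)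
          rw [hBn, Matrix.mul_zero, norm_zero, zero_mul, add_zero] at hN
          have hω1 : ω' i 1 = ‖(A i)⁻¹ * C (i - 1)‖ := by
            rw [hω'1, hω i (by omega) (by omega), hBn, Matrix.mul_zero, norm_zero, sub_zero,
              div_one]
          rw [hω1]
          exact hN
        | succ d IHd =>
          intro i hi j hj1 hij
          by_cases hin' : i = n
          · subst hin'
            have hN := normRec i j (by omega) (by omega) hj1 (by omega) (by omega)
            rw [hBn, Matrix.mul_zero, norm_zero, zero_mul, add_zero] at hN
            have hω1 : ω' i 1 = ‖(A i)⁻¹ * C (i - 1)‖ := by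
              rw [hω'1, hω i (by omega) (by omega), hBn, Matrix.mul_zero, norm_zero, sub_zero,
                div_one]
            rw [hω1]
            exact hN
          · have hilt : i < n := by omega
            have hrec : ‖Z (i + 1) j‖ ≤ ω' (i + 1) 1 * ‖Z i j‖ := by
              have := IHd (i + 1) (by omega) j hj1 (by omega)
              rwa [show i + 1 - 1 = i from rfl] at this
            obtain ⟨hf0, hf1⟩ := omegaFacts 1 (by omega) (by omega) (i + 1) (by omega) (by omega)
            have hstep := omegaStep i j (ω' (i + 1) 1) hj1 hij (by omega) hf0 hf1 hrec
            have hc := hBA i (by omega) (by omega)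
            have hcn := norm_nonneg ((A i)⁻¹ * B i)
            have hωeq : ω' i 1 = ‖(A i)⁻¹ * C (i - 1)‖ / (1 - ‖(A i)⁻¹ * B i‖) := by
              rw [hω'1, hω i (by omega) (by omega)]
            have hdenle : 1 - ‖(A i)⁻¹ * B i‖ ≤ 1 - ‖(A i)⁻¹ * B i‖ * ω' (i + 1) 1 := by
              nlinarith
            have hdiv : ‖(A i)⁻¹ * C (i - 1)‖ / (1 - ‖(A i)⁻¹ * B i‖ * ω' (i + 1) 1)
                ≤ ω' i 1 := by
              rw [hωeq]
              exact div_le_div_of_nonneg_left (norm_nonneg _) (by linarith) hdenle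
            calc ‖Z i j‖ ≤ (‖(A i)⁻¹ * C (i - 1)‖ / (1 - ‖(A i)⁻¹ * B i‖ * ω' (i + 1) 1)) *
                  ‖Z (i - 1) j‖ := hstep
              _ ≤ ω' i 1 * ‖Z (i - 1) j‖ := mul_le_mul_of_nonneg_right hdiv (norm_nonneg _)
      exact key (n - i) i (by omega) j hj1 hij
    | succ t ht IH =>
      intro htn i j hj1 hij hin
      by_cases hit : n - (t + 1) + 1 < i
      · rw [hω'a i (t + 1) (by omega) hin (by omega) htn hit, Nat.add_sub_cancel]
        exact IH (by omega) i j hj1 hij hin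
      · have hile : i ≤ n - 1 := by omega
        have hrec0 := IH (by omega) (i + 1) j hj1 (by omega) (by omega)
        rw [show i + 1 - 1 = i from rfl] at hrec0
        obtain ⟨hf0, hf1⟩ := omegaFacts t (by omega) (by omega) (i + 1) (by omega) (by omega)
        have hstep := omegaStep i j (ω' (i + 1) t) hj1 hij hin hf0 hf1 hrec0
        rw [hω'b i (t + 1) (by omega) hin (by omega) htn (by omega), Nat.add_sub_cancel]
        exact hstep
  -- conclusion
  intro t ht1 htn
  constructor
  · intro i j h1 hij hjn
    set ρ := (Finset.Icc 1 n).sup' (Finset.nonempty_Icc.mpr (by omega)) fun k => τ' k t with hρ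
    have hρle : ∀ k, 1 ≤ k → k ≤ n → τ' k t ≤ ρ := fun k hk1 hk2 =>
      Finset.le_sup' (fun k => τ' k t) (Finset.mem_Icc.mpr ⟨hk1, hk2⟩)
    have hρ0 : 0 ≤ ρ :=
      le_trans (tauFacts t ht1 htn 1 le_rfl (by omega)).1 (hρle 1 le_rfl (by omega))
    have key : ∀ d, 1 ≤ d → ∀ i, 1 ≤ i → i + d ≤ n → ‖Z i (i + d)‖ ≤ ρ ^ d * ‖Z (i + d) (i + d)‖ := by
      intro d hd
      induction d, hd using Nat.le_induction with
      | base =>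
        intro i h1 hin
        have := tauBound t ht1 htn i (i + 1) h1 (by omega) hin
        calc ‖Z i (i + 1)‖ ≤ τ' i t * ‖Z (i + 1) (i + 1)‖ := this
          _ ≤ ρ ^ 1 * ‖Z (i + 1) (i + 1)‖ := by
              rw [pow_one]
              exact mul_le_mul_of_nonneg_right (hρle i h1 (by omega)) (norm_nonneg _)
      | succ d hd IHd =>
        intro i h1 hin
        have step := tauBound t ht1 htn i (i + (d + 1)) h1 (by omega) hin
        have hIH : ‖Z (i + 1) (i + 1 + d)‖ ≤ ρ ^ d * ‖Z (i + 1 + d) (i + 1 + d)‖ :=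
          IHd (i + 1) (by omega) (by omega)
        rw [show i + 1 + d = i + (d + 1) by omega] at hIH
        calc ‖Z i (i + (d + 1))‖ ≤ τ' i t * ‖Z (i + 1) (i + (d + 1))‖ := step
          _ ≤ ρ * (ρ ^ d * ‖Z (i + (d + 1)) (i + (d + 1))‖) := by
              apply mul_le_mul (hρle i h1 (by omega)) hIH (norm_nonneg _) hρ0
          _ = ρ ^ (d + 1) * ‖Z (i + (d + 1)) (i + (d + 1))‖ := by ring
    have := key (j - i) (by omega) i h1 (by omega)
    rwa [show i + (j - i) = j by omega] at this
  · intro i j hj1 hij hin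
    set ρ := (Finset.Icc 1 n).sup' (Finset.nonempty_Icc.mpr (by omega)) fun k => ω' k t with hρ
    have hρle : ∀ k, 1 ≤ k → k ≤ n → ω' k t ≤ ρ := fun k hk1 hk2 =>
      Finset.le_sup' (fun k => ω' k t) (Finset.mem_Icc.mpr ⟨hk1, hk2⟩)
    have hρ0 : 0 ≤ ρ :=
      le_trans (omegaFacts t ht1 htn 1 le_rfl (by omega)).1 (hρle 1 le_rfl (by omega))
    have key : ∀ d, 1 ≤ d → ∀ j, 1 ≤ j → j + d ≤ n → ‖Z (j + d) j‖ ≤ ρ ^ d * ‖Z j j‖ := by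
      intro d hd
      induction d, hd using Nat.le_induction with
      | base =>
        intro j h1 hin
        have := omegaBound t ht1 htn (j + 1) j h1 (by omega) hin
        rw [show j + 1 - 1 = j from rfl] at this
        calc ‖Z (j + 1) j‖ ≤ ω' (j + 1) t * ‖Z j j‖ := this
          _ ≤ ρ ^ 1 * ‖Z j j‖ := by
              rw [pow_one]
              exact mul_le_mul_of_nonneg_right (hρle (j + 1) (by omega) (by omega)) (norm_nonneg _)
      | succ d hd IHd =>
        intro j h1 hin
        have step := omegaBound t ht1 htn (j + (d + 1)) j h1 (by omega) hin
        rw [show j + (d + 1) - 1 = j + d by omega] at step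
        have hIH : ‖Z (j + d) j‖ ≤ ρ ^ d * ‖Z j j‖ := IHd j h1 (by omega)
        calc ‖Z (j + (d + 1)) j‖ ≤ ω' (j + (d + 1)) t * ‖Z (j + d) j‖ := step
          _ ≤ ρ * (ρ ^ d * ‖Z j j‖) := by
              apply mul_le_mul (hρle (j + (d + 1)) (by omega) (by omega)) hIH (norm_nonneg _) hρ0
          _ = ρ ^ (d + 1) * ‖Z j j‖ := by ring
    have := key (i - j) (by omega) j hj1 (by omega)
    rwa [show j + (i - j) = i by omega] at this
end

section
/- If an n×n block matrix A = [A_{ij}] with blocks A_{ij} ∈ ℂ^{m×m} is row block strictly diagonally dominant, i.e. every diagonal block A_{ii} is invertible and ∑_{j≠i} ‖A_{ii}⁻¹A_{ij}‖ < 1 for each i = 1,…,n, then A is nonsingular (invertible as an nm×nm complex matrix). -/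
open scoped Matrix
attribute [local instance] Matrix.linftyOpNormedRing

/-- The `n × n` block matrix with `m × m` blocks `A i j`. -/
noncomputable def blockMat (n m : ℕ) (A : Fin n → Fin n → Matrix (Fin m) (Fin m) ℂ) :
    Matrix (Fin n × Fin m) (Fin n × Fin m) ℂ :=
  Matrix.of fun p q => A p.1 q.1 p.2 q.2

/-- A row block strictly diagonally dominant matrix is nonsingular. -/
theorem blockStrictDiagDominant_isUnit
    (n m : ℕ) (hn : 1 ≤ n) (hm : 1 ≤ m)
    (A : Fin n → Fin n → Matrix (Fin m) (Fin m) ℂ)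
    (hdiag : ∀ i, IsUnit (A i i))
    (hdom : ∀ i, ∑ j ∈ Finset.univ.erase i, ‖(A i i)⁻¹ * A i j‖ < 1) :
    IsUnit (blockMat n m A) := by
  rw [Matrix.isUnit_iff_isUnit_det]
  by_contra hdet
  have hdet0 : (blockMat n m A).det = 0 := by
    simpa [isUnit_iff_ne_zero] using hdet
  obtain ⟨x, hx0, hx⟩ := (Matrix.exists_mulVec_eq_zero_iff).2 hdet0
  set v : Fin n → Fin m → ℂ := fun j l => x (j, l) with hv
  -- block equations
  have h0 : ∀ i : Fin n, ∑ j : Fin n, (A i j *ᵥ v j) = 0 := by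
    intro i
    funext k
    have := congrFun hx (i, k)
    simp only [Matrix.mulVec, dotProduct, blockMat, Matrix.of_apply,
      Fintype.sum_prod_type, Pi.zero_apply] at this
    simpa [Matrix.mulVec, dotProduct, Finset.sum_apply] using this
  have hinv : ∀ i, (A i i)⁻¹ * A i i = 1 := fun i =>
    Matrix.nonsing_inv_mul _ ((Matrix.isUnit_iff_isUnit_det _).1 (hdiag i))
  have key : ∀ i : Fin n,
      v i = -∑ j ∈ Finset.univ.erase i, ((A i i)⁻¹ * A i j) *ᵥ v j := by
    intro i
    have h1 : A i i *ᵥ v i = -∑ j ∈ Finset.univ.erase i, A i j *ᵥ v j := by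
      have h := h0 i
      rw [← Finset.add_sum_erase _ _ (Finset.mem_univ i)] at h
      exact eq_neg_of_add_eq_zero_left h
    calc v i = ((A i i)⁻¹ * A i i) *ᵥ v i := by rw [hinv, Matrix.one_mulVec]
      _ = (A i i)⁻¹ *ᵥ (A i i *ᵥ v i) := (Matrix.mulVec_mulVec _ _ _).symm
      _ = -∑ j ∈ Finset.univ.erase i, ((A i i)⁻¹ * A i j) *ᵥ v j := by
          rw [h1, Matrix.mulVec_neg]
          congr 1
          rw [← Matrix.mulVecLin_apply, map_sum]
          simp [Matrix.mulVecLin_apply, Matrix.mulVec_mulVec]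
  -- pick index maximizing block norm
  obtain ⟨i0, -, hmax⟩ := Finset.exists_max_image (Finset.univ : Finset (Fin n))
    (fun j => ‖v j‖) ⟨⟨0, hn⟩, Finset.mem_univ _⟩
  have hbound : ‖v i0‖ ≤ (∑ j ∈ Finset.univ.erase i0, ‖(A i0 i0)⁻¹ * A i0 j‖) * ‖v i0‖ := by
    calc ‖v i0‖
        = ‖∑ j ∈ Finset.univ.erase i0, ((A i0 i0)⁻¹ * A i0 j) *ᵥ v j‖ := by
          rw [key i0, norm_neg]
      _
        ≤ ∑ j ∈ Finset.univ.erase i0, ‖((A i0 i0)⁻¹ * A i0 j) *ᵥ v j‖ :=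
          norm_sum_le _ _
      _ ≤ ∑ j ∈ Finset.univ.erase i0, ‖(A i0 i0)⁻¹ * A i0 j‖ * ‖v j‖ :=
          Finset.sum_le_sum fun j _ => Matrix.linfty_opNorm_mulVec _ _
      _ ≤ ∑ j ∈ Finset.univ.erase i0, ‖(A i0 i0)⁻¹ * A i0 j‖ * ‖v i0‖ :=
          Finset.sum_le_sum fun j _ =>
            mul_le_mul_of_nonneg_left (hmax j (Finset.mem_univ _)) (norm_nonneg _)
      _ = (∑ j ∈ Finset.univ.erase i0, ‖(A i0 i0)⁻¹ * A i0 j‖) * ‖v i0‖ := by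
          rw [Finset.sum_mul]
  have hvi0 : ‖v i0‖ = 0 := by
    by_contra h
    have hpos : 0 < ‖v i0‖ := lt_of_le_of_ne (norm_nonneg _) (Ne.symm h)
    have := lt_of_le_of_lt hbound (by
      calc (∑ j ∈ Finset.univ.erase i0, ‖(A i0 i0)⁻¹ * A i0 j‖) * ‖v i0‖
          < 1 * ‖v i0‖ := by
            exact mul_lt_mul_of_pos_right (hdom i0) hpos
        _ = ‖v i0‖ := one_mul _)
    exact lt_irrefl _ this
  apply hx0
  funext p
  have : ‖v p.1‖ ≤ 0 := hvi0 ▸ hmax p.1 (Finset.mem_univ _)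
  have hz : v p.1 = 0 := norm_le_zero_iff.1 this
  have := congrFun hz p.2
  simpa [hv] using this
end

section
/- Let A = [A_{ij}] be an n×n block matrix with blocks A_{ij} ∈ ℂ^{m×m}, and let λ ∈ ℂ be an eigenvalue of A (viewed as an nm×nm complex matrix). Then there exists at least one index i ∈ {1,…,n} such that either the block A_{ii} − λI is not invertible, or ∑_{j≠i} ‖(A_{ii} − λI)⁻¹A_{ij}‖ ≥ 1. (Block Gershgorin theorem: every eigenvalue lies in the union of the sets G_i = {z ∈ ℂ : A_{ii} − zI is singular, or ∑_{j≠i} ‖(A_{ii} − zI)⁻¹A_{ij}‖ ≥ 1}.) -/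
open scoped Matrix
attribute [local instance] Matrix.linftyOpNormedRing

/-- Block Gershgorin theorem: every eigenvalue of a block matrix lies in the union of the
block Gershgorin sets. -/
theorem block_gershgorin
    (n m : ℕ) (hn : 1 ≤ n) (hm : 1 ≤ m)
    (A : Fin n → Fin n → Matrix (Fin m) (Fin m) ℂ) (lam : ℂ)
    (hev : ∃ x : Fin n × Fin m → ℂ, x ≠ 0 ∧ (blockMat n m A).mulVec x = lam • x) :
    ∃ i, ¬ IsUnit (A i i - lam • (1 : Matrix (Fin m) (Fin m) ℂ)) ∨
      1 ≤ ∑ j ∈ Finset.univ.erase i,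
        ‖(A i i - lam • (1 : Matrix (Fin m) (Fin m) ℂ))⁻¹ * A i j‖ := by
  obtain ⟨x, hx, heq⟩ := hev
  set y : Fin n → Fin m → ℂ := fun i k => x (i, k) with hy
  -- block form of the eigenvalue equation
  have hblock : ∀ i : Fin n, ∑ j, (A i j) *ᵥ (y j) = lam • y i := by
    intro i
    funext k
    have := congrFun heq (i, k)
    simp only [Matrix.mulVec, dotProduct, blockMat, Matrix.of_apply,
      Fintype.sum_prod_type] at this
    simpa [Matrix.mulVec, dotProduct, Finset.sum_apply, y] using this
  -- choose the block of maximal norm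
  obtain ⟨i, -, hmax⟩ := Finset.exists_max_image Finset.univ (fun j => ‖y j‖)
    ⟨⟨0, hn⟩, Finset.mem_univ _⟩
  have hyi : 0 < ‖y i‖ := by
    have : x ≠ 0 := hx
    rw [Function.ne_iff] at this
    obtain ⟨⟨j, k⟩, hjk⟩ := this
    have hyj : y j ≠ 0 := by
      intro h
      exact hjk (congrFun h k)
    calc (0 : ℝ) < ‖y j‖ := norm_pos_iff.mpr hyj
      _ ≤ ‖y i‖ := hmax j (Finset.mem_univ _)
  refine ⟨i, ?_⟩
  by_cases hB : IsUnit (A i i - lam • (1 : Matrix (Fin m) (Fin m) ℂ))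
  · right
    set B := A i i - lam • (1 : Matrix (Fin m) (Fin m) ℂ) with hBdef
    have hdet : IsUnit B.det := (Matrix.isUnit_iff_isUnit_det B).mp hB
    have hBinv : B⁻¹ * B = 1 := Matrix.nonsing_inv_mul B hdet
    -- B *ᵥ y i = - ∑_{j ≠ i} A i j *ᵥ y j
    have hkey : B *ᵥ y i = -∑ j ∈ Finset.univ.erase i, (A i j) *ᵥ (y j) := by
      have h1 : ∑ j, (A i j) *ᵥ (y j)
          = (A i i) *ᵥ (y i) + ∑ j ∈ Finset.univ.erase i, (A i j) *ᵥ (y j) := by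
        rw [← Finset.add_sum_erase _ _ (Finset.mem_univ i)]
      have h2 := hblock i
      rw [h1] at h2
      have h3 : (lam • (1 : Matrix (Fin m) (Fin m) ℂ)) *ᵥ y i = lam • y i := by
        simp [Matrix.smul_mulVec]
      rw [hBdef, Matrix.sub_mulVec, h3]
      rw [← h2]
      abel
    have hyieq : y i = -∑ j ∈ Finset.univ.erase i, (B⁻¹ * A i j) *ᵥ (y j) := by
      have : B⁻¹ *ᵥ (B *ᵥ y i) = y i := by
        rw [Matrix.mulVec_mulVec, hBinv, Matrix.one_mulVec]
      rw [← this, hkey, Matrix.mulVec_neg]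
      congr 1
      rw [show (B⁻¹ *ᵥ ∑ j ∈ Finset.univ.erase i, (A i j) *ᵥ (y j))
          = ∑ j ∈ Finset.univ.erase i, B⁻¹ *ᵥ ((A i j) *ᵥ (y j)) by
        simpa using map_sum B⁻¹.mulVecLin (fun j => (A i j) *ᵥ (y j)) (Finset.univ.erase i)]
      exact Finset.sum_congr rfl fun j _ => Matrix.mulVec_mulVec _ _ _
    have hle : ‖y i‖ ≤ (∑ j ∈ Finset.univ.erase i, ‖B⁻¹ * A i j‖) * ‖y i‖ := by
      calc ‖y i‖ = ‖∑ j ∈ Finset.univ.erase i, (B⁻¹ * A i j) *ᵥ (y j)‖ := by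
            rw [hyieq, norm_neg]
        _ ≤ ∑ j ∈ Finset.univ.erase i, ‖(B⁻¹ * A i j) *ᵥ (y j)‖ := norm_sum_le _ _
        _ ≤ ∑ j ∈ Finset.univ.erase i, ‖B⁻¹ * A i j‖ * ‖y i‖ := by
            refine Finset.sum_le_sum fun j _ => ?_
            calc ‖(B⁻¹ * A i j) *ᵥ (y j)‖ ≤ ‖B⁻¹ * A i j‖ * ‖y j‖ :=
                  Matrix.linfty_opNorm_mulVec _ _
              _ ≤ ‖B⁻¹ * A i j‖ * ‖y i‖ := by
                  exact mul_le_mul_of_nonneg_left (hmax j (Finset.mem_univ _)) (norm_nonneg _)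
        _ = (∑ j ∈ Finset.univ.erase i, ‖B⁻¹ * A i j‖) * ‖y i‖ := by
            rw [Finset.sum_mul]
    have := le_of_mul_le_mul_right (by linarith : 1 * ‖y i‖ ≤ (∑ j ∈ Finset.univ.erase i, ‖B⁻¹ * A i j‖) * ‖y i‖) hyi
    simpa using this
  · exact Or.inl hB
end
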